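/- arXiv:2401.01687 — 2 statements merged into one kernel-verified Lean document; each statement's English description precedes it below -/
import Mathlib

section
/- For all integers n and k with 1 ≤ k ≤ n, the total number of non-symmetric peaks over all set partitions of [n] with exactly k blocks (i.e., the sum over all π ∈ P_{n,k}, in canonical sequential form, of the number of indices i with π_i < π_{i+1} > π_{i+2} and π_i ≠ π_{i+2}) equals C(k−1,2)·S(n−1,k) + 2·Σ_{j=3}^{k} C(j,3) · Σ_{i=3}^{n−k} j^{i−3} · S(n−i,k), where S(m,k) denotes the Stirling number of the second kind. -/
open scoped BigOperators

/-- The set of canonical sequential forms (restricted growth functions) of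
set partitions of `[n] = {1,…,n}` with exactly `k` blocks: words
`π : Fin n → ℕ` with letters in `{1,…,k}` satisfying `π 0 = 1`,
`π i ≤ 1 + max (π 0, …, π (i-1))` for `i ≠ 0`, and `max π = k`. -/
def SetPartitionWords (n k : ℕ) : Set (Fin n → ℕ) :=
  {π | (∀ i, 1 ≤ π i) ∧
       (∀ i : Fin n, (i : ℕ) = 0 → π i = 1) ∧
       (∀ i : Fin n, (i : ℕ) ≠ 0 →
          π i ≤ 1 + (Finset.univ.filter (fun j : Fin n => j < i)).sup π) ∧
       Finset.univ.sup π = k}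

/-- Words of length `n` over the alphabet `[j] = {1,…,j}`. -/
def Words (n j : ℕ) : Set (Fin n → ℕ) :=
  {w | ∀ i, 1 ≤ w i ∧ w i ≤ j}

/-- The number of symmetric peaks of a word: positions `ℓ` with
`π ℓ < π (ℓ+1) > π (ℓ+2)` and `π ℓ = π (ℓ+2)`. -/
noncomputable def sympeak {n : ℕ} (π : Fin n → ℕ) : ℕ :=
  Set.ncard {ℓ : Fin n | ∃ h : (ℓ : ℕ) + 2 < n,
    π ℓ < π ⟨(ℓ : ℕ) + 1, by omega⟩ ∧
    π ⟨(ℓ : ℕ) + 2, h⟩ < π ⟨(ℓ : ℕ) + 1, by omega⟩ ∧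
    π ℓ = π ⟨(ℓ : ℕ) + 2, h⟩}

/-- The number of non-symmetric peaks of a word: positions `ℓ` with
`π ℓ < π (ℓ+1) > π (ℓ+2)` and `π ℓ ≠ π (ℓ+2)`. -/
noncomputable def nonsympeak {n : ℕ} (π : Fin n → ℕ) : ℕ :=
  Set.ncard {ℓ : Fin n | ∃ h : (ℓ : ℕ) + 2 < n,
    π ℓ < π ⟨(ℓ : ℕ) + 1, by omega⟩ ∧
    π ⟨(ℓ : ℕ) + 2, h⟩ < π ⟨(ℓ : ℕ) + 1, by omega⟩ ∧
    π ℓ ≠ π ⟨(ℓ : ℕ) + 2, h⟩}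

/-- The Stirling number of the second kind `S(n,k)`: the number of set
partitions of an `n`-element set into exactly `k` nonempty blocks. -/
noncomputable def stirlingS2 (n k : ℕ) : ℕ :=
  Nat.card {P : Finpartition (Finset.univ : Finset (Fin n)) // P.parts.card = k}

namespace NSP
open Finset


lemma mem_SPW {n k : ℕ} {π : Fin n → ℕ} : π ∈ SetPartitionWords n k ↔
    ((∀ i, 1 ≤ π i) ∧
       (∀ i : Fin n, (i : ℕ) = 0 → π i = 1) ∧
       (∀ i : Fin n, (i : ℕ) ≠ 0 →
          π i ≤ 1 + (Finset.univ.filter (fun j : Fin n => j < i)).sup π) ∧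
       Finset.univ.sup π = k) := Iff.rfl

instance (n k : ℕ) : DecidablePred (· ∈ SetPartitionWords n k) := fun _ =>
  decidable_of_iff _ mem_SPW.symm

def extf {n : ℕ} (π : Fin n → ℕ) (m : ℕ) : ℕ := if h : m < n then π ⟨m, h⟩ else 0

lemma extf_lt {n : ℕ} (π : Fin n → ℕ) {m : ℕ} (h : m < n) : extf π m = π ⟨m, h⟩ := dif_pos h

def peakP {n : ℕ} (π : Fin n → ℕ) (ℓ : ℕ) : Prop :=
  extf π ℓ < extf π (ℓ+1) ∧ extf π (ℓ+2) < extf π (ℓ+1) ∧ extf π ℓ ≠ extf π (ℓ+2)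

instance {n : ℕ} (π : Fin n → ℕ) : DecidablePred (peakP π) := fun ℓ => by
  unfold peakP; infer_instance

def nspF {n : ℕ} (π : Fin n → ℕ) : ℕ := ((range (n-2)).filter (peakP π)).card

lemma nonsympeak_eq_nspF {n : ℕ} (π : Fin n → ℕ) : nonsympeak π = nspF π := by
  classical
  rw [nonsympeak, nspF, Set.ncard_eq_toFinset_card _ (Set.toFinite _)]
  refine Finset.card_bij (fun (ℓ : Fin n) _ => (ℓ : ℕ)) ?_ ?_ ?_
  · intro ℓ hℓ
    rw [Set.Finite.mem_toFinset] at hℓ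
    obtain ⟨h, h1, h2, h3⟩ := hℓ
    have e0 : extf π (ℓ:ℕ) = π ℓ := by rw [extf_lt π (show (ℓ:ℕ) < n by omega)]
    have e1 : extf π ((ℓ:ℕ)+1) = π ⟨(ℓ:ℕ)+1, by omega⟩ := extf_lt π (by omega)
    have e2 : extf π ((ℓ:ℕ)+2) = π ⟨(ℓ:ℕ)+2, h⟩ := extf_lt π h
    have hr : (ℓ:ℕ) ∈ range (n-2) := Finset.mem_range.mpr (by omega)
    have hp : peakP π (ℓ:ℕ) := by rw [peakP, e0, e1, e2]; exact ⟨h1, h2, h3⟩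
    exact Finset.mem_filter.mpr ⟨hr, hp⟩
  · intro a _ b _ hab
    exact Fin.val_injective hab
  · intro m hm
    rw [Finset.mem_filter, Finset.mem_range] at hm
    obtain ⟨hm1, hpk⟩ := hm
    have hmn : m < n := by omega
    have h2n : m + 2 < n := by omega
    refine ⟨⟨m, hmn⟩, ?_, rfl⟩
    rw [Set.Finite.mem_toFinset]
    obtain ⟨h1, h2, h3⟩ := hpk
    have e0 : extf π m = π ⟨m, hmn⟩ := extf_lt π hmn
    have e1 : extf π (m+1) = π ⟨m+1, by omega⟩ := extf_lt π (by omega)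
    have e2 : extf π (m+2) = π ⟨m+2, h2n⟩ := extf_lt π h2n
    rw [e0, e1] at h1
    rw [e1, e2] at h2
    rw [e0, e2] at h3
    exact ⟨h2n, h1, h2, h3⟩

def SPF (n k : ℕ) : Finset (Fin n → ℕ) :=
  (Fintype.piFinset (fun _ : Fin n => Finset.range (k+1))).filter (· ∈ SetPartitionWords n k)

lemma mem_SPF {n k : ℕ} {π : Fin n → ℕ} : π ∈ SPF n k ↔ π ∈ SetPartitionWords n k := by
  constructor
  · exact fun h => (Finset.mem_filter.mp h).2
  · intro h
    refine Finset.mem_filter.mpr ⟨Fintype.mem_piFinset.mpr (fun i => ?_), h⟩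
    rw [Finset.mem_range, Nat.lt_succ_iff]
    obtain ⟨h1, h2, h3, h4⟩ := h
    rw [← h4]
    exact Finset.le_sup (Finset.mem_univ i)

lemma coe_SPF (n k : ℕ) : (↑(SPF n k) : Set (Fin n → ℕ)) = SetPartitionWords n k := by
  ext π; simp [mem_SPF]


lemma filter_lt_castSucc {n : ℕ} (i : Fin n) :
    (Finset.univ.filter (fun j : Fin (n+1) => j < Fin.castSucc i)) =
      (Finset.univ.filter (fun j : Fin n => j < i)).map Fin.castSuccEmb := by
  ext j
  simp only [Finset.mem_filter, Finset.mem_univ, true_and, Finset.mem_map,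
    Fin.castSuccEmb, Function.Embedding.coeFn_mk, Fin.lt_def, Fin.coe_castSucc]
  constructor
  · intro hj
    have hj' : (j:ℕ) < n := lt_trans hj i.isLt
    exact ⟨⟨j, hj'⟩, hj, by ext; simp⟩
  · rintro ⟨a, ha, rfl⟩
    exact ha

lemma sup_filter_castSucc {n : ℕ} (π : Fin (n+1) → ℕ) (i : Fin n) :
    (Finset.univ.filter (fun j : Fin (n+1) => j < Fin.castSucc i)).sup π
      = (Finset.univ.filter (fun j : Fin n => j < i)).sup (Fin.init π) := by
  rw [filter_lt_castSucc, Finset.sup_map]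
  rfl

lemma filter_lt_last (n : ℕ) :
    (Finset.univ.filter (fun j : Fin (n+1) => j < Fin.last n)) =
      Finset.univ.map Fin.castSuccEmb := by
  ext j
  simp only [Finset.mem_filter, Finset.mem_univ, true_and, Finset.mem_map,
    Fin.castSuccEmb, Function.Embedding.coeFn_mk, Fin.lt_def, Fin.val_last]
  constructor
  · intro hj
    exact ⟨⟨j, hj⟩, by ext; simp⟩
  · rintro ⟨a, _, rfl⟩
    exact a.isLt

lemma sup_univ_last {n : ℕ} (π : Fin (n+1) → ℕ) :
    Finset.univ.sup π = max (Finset.univ.sup (Fin.init π)) (π (Fin.last n)) := by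
  rw [Fin.univ_castSuccEmb, Finset.sup_cons, Finset.sup_map]
  rw [max_comm]
  rfl

lemma init_mem_setOf {n : ℕ} (π : Fin (n+1) → ℕ) : Fin.init π = π ∘ Fin.castSucc := rfl

lemma mem_SPW_succ_iff {n k : ℕ} (hk : 1 ≤ k) (π : Fin (n+1) → ℕ) :
    π ∈ SetPartitionWords (n+1) k ↔
      ((Fin.init π ∈ SetPartitionWords n k ∧ 1 ≤ π (Fin.last n) ∧ π (Fin.last n) ≤ k) ∨
       (Fin.init π ∈ SetPartitionWords n (k-1) ∧ π (Fin.last n) = k)) := by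
  constructor
  · rintro ⟨h1, h2, h3, h4⟩
    have A1 : ∀ i : Fin n, 1 ≤ Fin.init π i := fun i => h1 _
    have A2 : ∀ i : Fin n, (i : ℕ) = 0 → Fin.init π i = 1 := by
      intro i hi
      exact h2 (Fin.castSucc i) (by simpa using hi)
    have A3 : ∀ i : Fin n, (i : ℕ) ≠ 0 →
        Fin.init π i ≤ 1 + (Finset.univ.filter (fun j : Fin n => j < i)).sup (Fin.init π) := by
      intro i hi
      have := h3 (Fin.castSucc i) (by simpa using hi)
      rwa [sup_filter_castSucc] at this
    have hmax : max (Finset.univ.sup (Fin.init π)) (π (Fin.last n)) = k := by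
      rw [← sup_univ_last]; exact h4
    have hc_le : π (Fin.last n) ≤ 1 + Finset.univ.sup (Fin.init π) := by
      rcases Nat.eq_zero_or_pos n with hn | hn
      · subst hn
        have : π (Fin.last 0) = 1 := h2 (Fin.last 0) rfl
        omega
      · have := h3 (Fin.last n) (by simp; omega)
        rwa [filter_lt_last, Finset.sup_map] at this
    rcases le_or_gt (π (Fin.last n)) (Finset.univ.sup (Fin.init π)) with hcs | hcs
    · left
      refine ⟨⟨A1, A2, A3, ?_⟩, h1 _, ?_⟩ <;> omega
    · right
      refine ⟨⟨A1, A2, A3, ?_⟩, ?_⟩ <;> omega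
  · have hn0 : n = 0 → Finset.univ.sup (Fin.init π) = 0 := by
      intro hn; subst hn
      rw [Finset.univ_eq_empty, Finset.sup_empty]; rfl
    rintro (⟨⟨h1, h2, h3, h4⟩, hc1, hc2⟩ | ⟨⟨h1, h2, h3, h4⟩, hc⟩) <;>
      refine ⟨?_, ?_, ?_, ?_⟩
    · intro i
      induction i using Fin.lastCases with
      | last => exact hc1
      | cast i => exact h1 i
    · intro i hi
      induction i using Fin.lastCases with
      | last =>
        exfalso
        simp only [Fin.val_last] at hi
        subst hi
        have := hn0 rfl
        omega
      | cast i => exact h2 i (by simpa using hi)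
    · intro i hi
      induction i using Fin.lastCases with
      | last =>
        rw [filter_lt_last, Finset.sup_map]
        have : Finset.univ.sup (π ∘ Fin.castSuccEmb) = Finset.univ.sup (Fin.init π) := rfl
        rw [this]
        omega
      | cast i =>
        rw [sup_filter_castSucc]
        exact h3 i (by simpa using hi)
    · rw [sup_univ_last]
      omega
    · intro i
      induction i using Fin.lastCases with
      | last => omega
      | cast i => exact h1 i
    · intro i hi
      induction i using Fin.lastCases with
      | last =>
        simp only [Fin.val_last] at hi
        subst hi
        have := hn0 rfl
        omega
      | cast i => exact h2 i (by simpa using hi)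
    · intro i hi
      induction i using Fin.lastCases with
      | last =>
        rw [filter_lt_last, Finset.sup_map]
        have : Finset.univ.sup (π ∘ Fin.castSuccEmb) = Finset.univ.sup (Fin.init π) := rfl
        rw [this]
        omega
      | cast i =>
        rw [sup_filter_castSucc]
        exact h3 i (by simpa using hi)
    · rw [sup_univ_last]
      omega

lemma SPF_succ_decomp {n k : ℕ} (hk : 1 ≤ k) :
    SPF (n+1) k =
      ((SPF n k ×ˢ Finset.Icc 1 k).image (fun p => Fin.snoc p.1 p.2)) ∪
        ((SPF n (k-1)).image (fun σ => Fin.snoc σ (k:ℕ))) := by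
  ext π
  rw [Finset.mem_union, mem_SPF, mem_SPW_succ_iff hk π]
  constructor
  · rintro (⟨hσ, hc1, hc2⟩ | ⟨hσ, hc⟩)
    · left
      refine Finset.mem_image.mpr ⟨(Fin.init π, π (Fin.last n)), ?_, Fin.snoc_init_self π⟩
      exact Finset.mem_product.mpr ⟨mem_SPF.mpr hσ, Finset.mem_Icc.mpr ⟨hc1, hc2⟩⟩
    · right
      refine Finset.mem_image.mpr ⟨Fin.init π, mem_SPF.mpr hσ, ?_⟩
      rw [← hc]
      exact Fin.snoc_init_self π
  · rintro (h | h)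
    · obtain ⟨⟨σ, c⟩, hp, rfl⟩ := Finset.mem_image.mp h
      obtain ⟨hσ, hc⟩ := Finset.mem_product.mp hp
      rw [Finset.mem_Icc] at hc
      left
      rw [Fin.init_snoc, Fin.snoc_last]
      exact ⟨mem_SPF.mp hσ, hc.1, hc.2⟩
    · obtain ⟨σ, hσ, rfl⟩ := Finset.mem_image.mp h
      right
      rw [Fin.init_snoc, Fin.snoc_last]
      exact ⟨mem_SPF.mp hσ, rfl⟩

lemma sup_eq_of_mem_SPF {n k : ℕ} {σ : Fin n → ℕ} (h : σ ∈ SPF n k) :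
    Finset.univ.sup σ = k := (mem_SPF.mp h).2.2.2

lemma sum_SPF_succ {n k : ℕ} (hk : 1 ≤ k) (f : (Fin (n+1) → ℕ) → ℕ) :
    ∑ π ∈ SPF (n+1) k, f π =
      (∑ σ ∈ SPF n k, ∑ c ∈ Finset.Icc 1 k, f (Fin.snoc σ c)) +
        ∑ σ ∈ SPF n (k-1), f (Fin.snoc σ (k:ℕ)) := by
  have hdisj : Disjoint ((SPF n k ×ˢ Finset.Icc 1 k).image
      (fun p : (Fin n → ℕ) × ℕ => (Fin.snoc p.1 p.2 : Fin (n+1) → ℕ)))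
      ((SPF n (k-1)).image (fun σ => (Fin.snoc σ (k:ℕ) : Fin (n+1) → ℕ))) := by
    rw [Finset.disjoint_left]
    rintro π h1 h2
    obtain ⟨⟨σ, c⟩, hp, rfl⟩ := Finset.mem_image.mp h1
    obtain ⟨σ', hσ', he⟩ := Finset.mem_image.mp h2
    have hs1 := sup_eq_of_mem_SPF (Finset.mem_product.mp hp).1
    have hs2 := sup_eq_of_mem_SPF hσ'
    have hss : σ' = σ := by
      have := congrArg Fin.init he
      rwa [Fin.init_snoc, Fin.init_snoc] at this
    rw [hss, hs1] at hs2
    omega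
  have hinj1 : Set.InjOn (fun p : (Fin n → ℕ) × ℕ => (Fin.snoc p.1 p.2 : Fin (n+1) → ℕ))
      ↑(SPF n k ×ˢ Finset.Icc 1 k) := by
    rintro ⟨σ, c⟩ _ ⟨σ', c'⟩ _ he
    have h1 := congrArg Fin.init he
    have h2 := congrArg (fun g : Fin (n+1) → ℕ => g (Fin.last n)) he
    simp only [Fin.init_snoc] at h1
    simp only [Fin.snoc_last] at h2
    simp [h1, h2]
  have hinj2 : Set.InjOn (fun σ : Fin n → ℕ => (Fin.snoc σ (k:ℕ) : Fin (n+1) → ℕ)) ↑(SPF n (k-1)) := by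
    intro σ _ σ' _ he
    have h1 := congrArg Fin.init he
    rwa [Fin.init_snoc, Fin.init_snoc] at h1
  rw [SPF_succ_decomp hk, Finset.sum_union hdisj, Finset.sum_image hinj1,
    Finset.sum_image hinj2, Finset.sum_product]

def Wc (n k : ℕ) : ℕ := (SPF n k).card

noncomputable def Tt (n k : ℕ) : ℕ := ∑ π ∈ SPF n k, nspF π

noncomputable def Aa (n k : ℕ) : ℕ :=
  ∑ π ∈ SPF n k, (if extf π (n-2) < extf π (n-1) then extf π (n-1) - 2 else 0)

def hsum (k s : ℕ) : ℕ := ∑ c ∈ Finset.Icc (s+1) k, (c - 2)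

lemma Wc_rec {n k : ℕ} (hk : 1 ≤ k) : Wc (n+1) k = k * Wc n k + Wc n (k-1) := by
  have h := sum_SPF_succ (n := n) hk (fun _ => 1)
  simp only [Finset.sum_const, smul_eq_mul, mul_one, Nat.card_Icc, Nat.add_sub_cancel] at h
  rw [Wc, Wc, Wc, mul_comm]
  omega

lemma SPF_zero {k : ℕ} (hk : 1 ≤ k) : SPF 0 k = ∅ := by
  ext π
  simp only [Finset.notMem_empty, iff_false]
  intro h
  have h4 := sup_eq_of_mem_SPF h
  rw [Finset.univ_eq_empty, Finset.sup_empty] at h4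
  simp only [bot_eq_zero] at h4  -- h4 : 0 = k
  omega

lemma Wc_nil {k : ℕ} (hk : 1 ≤ k) : Wc 0 k = 0 := by
  rw [Wc, SPF_zero hk, Finset.card_empty]

lemma Wc_zero_zero : Wc 0 0 = 1 := by
  rw [Wc]
  have : SPF 0 0 = {fun i : Fin 0 => 0} := by
    ext π
    simp only [Finset.mem_singleton]
    constructor
    · intro _
      funext i
      exact i.elim0
    · intro h
      rw [mem_SPF]
      refine ⟨fun i => i.elim0, fun i => i.elim0, fun i => i.elim0, ?_⟩
      rw [Finset.univ_eq_empty, Finset.sup_empty]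
      rfl
  rw [this, Finset.card_singleton]

lemma Wc_zero_left {n : ℕ} (hn : 1 ≤ n) : Wc n 0 = 0 := by
  rw [Wc, Finset.card_eq_zero]
  ext π
  simp only [Finset.notMem_empty, iff_false]
  intro h
  obtain ⟨h1, _, _, h4⟩ := mem_SPF.mp h
  have hi : (⟨0, by omega⟩ : Fin n) ∈ Finset.univ := Finset.mem_univ _
  have := Finset.le_sup (f := π) hi
  rw [h4] at this
  have := h1 ⟨0, by omega⟩
  omega

lemma Wc_eq_zero : ∀ {n k : ℕ}, n < k → Wc n k = 0 := by
  intro n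
  induction n with
  | zero => intro k h; exact Wc_nil h
  | succ n ih =>
    intro k h
    rw [Wc_rec (by omega), ih (by omega), ih (by omega)]
    simp

lemma Wc_first (k : ℕ) : ∀ m, Wc m (k+1) = ∑ s ∈ Finset.range m, (k+1)^s * Wc (m-1-s) k := by
  intro m
  induction m with
  | zero => simp [Wc_nil]
  | succ m ih =>
    rw [Wc_rec (by omega), ih, Nat.add_sub_cancel,
      Finset.sum_range_succ' (fun s => (k+1)^s * Wc (m+1-1-s) k) m]
    simp only [pow_zero, one_mul, Nat.add_sub_cancel, Nat.sub_zero]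
    rw [Finset.mul_sum]
    congr 1
    apply Finset.sum_congr rfl
    intro s _
    rw [show m - (s+1) = m - 1 - s by omega, pow_succ]
    ring

lemma two_choose_two (k : ℕ) : 2 * Nat.choose k 2 = k * (k-1) := by
  induction k with
  | zero => simp
  | succ k ih =>
    rw [Nat.choose_succ_succ, Nat.choose_one_right, Nat.mul_add, ih]
    cases k with
    | zero => simp
    | succ m =>
      simp only [Nat.succ_sub_one]
      ring

lemma hsum_succ_top {k t : ℕ} (ht : t ≤ k) : hsum (k+1) t = hsum k t + (k-1) := by
  rw [hsum, hsum, Finset.sum_Icc_succ_top (by omega)]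
  omega

lemma hsum_self (k : ℕ) : hsum k k = 0 := by
  rw [hsum, Finset.Icc_eq_empty (by omega), Finset.sum_empty]

lemma sum_hsum_const (k : ℕ) : ∑ t ∈ Finset.Icc 1 k, hsum k t = 2 * Nat.choose k 3 := by
  induction k with
  | zero => simp [hsum]
  | succ k ih =>
    rw [Finset.sum_Icc_succ_top (by omega), hsum_self]
    have hcongr : ∑ t ∈ Finset.Icc 1 k, hsum (k+1) t
        = ∑ t ∈ Finset.Icc 1 k, (hsum k t + (k-1)) := by
      apply Finset.sum_congr rfl
      intro t ht
      exact hsum_succ_top (Finset.mem_Icc.mp ht).2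
    rw [hcongr, Finset.sum_add_distrib, ih, Finset.sum_const, Nat.card_Icc,
      Nat.add_sub_cancel, smul_eq_mul]
    have h1 : Nat.choose (k+1) 3 = Nat.choose k 2 + Nat.choose k 3 := by
      rw [Nat.choose_succ_succ]
    have h2 := two_choose_two k
    omega

lemma extf_snoc_lt {n : ℕ} (σ : Fin n → ℕ) (c : ℕ) {m : ℕ} (h : m < n) :
    extf (Fin.snoc σ c : Fin (n+1) → ℕ) m = extf σ m := by
  rw [extf_lt _ (show m < n+1 by omega), extf_lt σ h]
  have he : (⟨m, show m < n+1 by omega⟩ : Fin (n+1)) = Fin.castSucc ⟨m, h⟩ := by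
    ext; simp
  rw [he, Fin.snoc_castSucc]

lemma extf_snoc_last {n : ℕ} (σ : Fin n → ℕ) (c : ℕ) :
    extf (Fin.snoc σ c : Fin (n+1) → ℕ) n = c := by
  rw [extf_lt _ (by omega)]
  have he : (⟨n, by omega⟩ : Fin (n+1)) = Fin.last n := rfl
  rw [he, Fin.snoc_last]

lemma peakP_snoc_lt {n : ℕ} (σ : Fin n → ℕ) (c : ℕ) {ℓ : ℕ} (h : ℓ + 2 < n) :
    peakP (Fin.snoc σ c : Fin (n+1) → ℕ) ℓ ↔ peakP σ ℓ := by
  rw [peakP, peakP, extf_snoc_lt σ c (show ℓ < n by omega),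
    extf_snoc_lt σ c (show ℓ+1 < n by omega), extf_snoc_lt σ c h]

lemma nspF_snoc {n : ℕ} (hn : 2 ≤ n) (σ : Fin n → ℕ) (c : ℕ) :
    nspF (Fin.snoc σ c : Fin (n+1) → ℕ) =
      nspF σ + (if extf σ (n-2) < extf σ (n-1) ∧ c < extf σ (n-1) ∧ extf σ (n-2) ≠ c
        then 1 else 0) := by
  classical
  rw [nspF, nspF]
  have h1 : n + 1 - 2 = (n - 2) + 1 := by omega
  rw [h1, Finset.range_add_one, Finset.filter_insert]
  have hfilter : Finset.filter (peakP (Fin.snoc σ c : Fin (n+1) → ℕ)) (Finset.range (n-2))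
      = Finset.filter (peakP σ) (Finset.range (n-2)) := by
    apply Finset.filter_congr
    intro ℓ hℓ
    rw [Finset.mem_range] at hℓ
    rw [peakP_snoc_lt σ c (show ℓ+2 < n by omega)]
  have hpk : peakP (Fin.snoc σ c : Fin (n+1) → ℕ) (n-2) ↔
      (extf σ (n-2) < extf σ (n-1) ∧ c < extf σ (n-1) ∧ extf σ (n-2) ≠ c) := by
    rw [peakP]
    have e1 : n - 2 + 1 = n - 1 := by omega
    have e2 : n - 2 + 2 = n := by omega
    rw [e1, e2, extf_snoc_lt σ c (show n-2 < n by omega),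
      extf_snoc_lt σ c (show n-1 < n by omega), extf_snoc_last]
  by_cases hc : extf σ (n-2) < extf σ (n-1) ∧ c < extf σ (n-1) ∧ extf σ (n-2) ≠ c
  · rw [if_pos (hpk.mpr hc), if_pos hc, hfilter,
      Finset.card_insert_of_notMem (by simp), Nat.add_comm]
  · rw [if_neg (fun h => hc (hpk.mp h)), if_neg hc, hfilter, Nat.add_zero]

lemma count_c {k a b : ℕ} (ha : 1 ≤ a) (hab : a < b) (hbk : b ≤ k) :
    (∑ c ∈ Finset.Icc 1 k, if a < b ∧ c < b ∧ a ≠ c then 1 else 0) = b - 2 := by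
  classical
  rw [← Finset.card_filter]
  have hf : Finset.filter (fun c => a < b ∧ c < b ∧ a ≠ c) (Finset.Icc 1 k)
      = (Finset.Icc 1 (b-1)).erase a := by
    ext c
    simp only [Finset.mem_filter, Finset.mem_Icc, Finset.mem_erase]
    omega
  rw [hf, Finset.card_erase_of_mem (Finset.mem_Icc.mpr (by omega)), Nat.card_Icc]
  omega

lemma Tt_rec {n k : ℕ} (hn : 2 ≤ n) (hk : 1 ≤ k) :
    Tt (n+1) k = k * Tt n k + Tt n (k-1) + Aa n k := by
  rw [Tt, sum_SPF_succ hk nspF]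
  have h1 : ∀ σ ∈ SPF n k, ∑ c ∈ Finset.Icc 1 k, nspF (Fin.snoc σ c : Fin (n+1) → ℕ)
      = k * nspF σ + (if extf σ (n-2) < extf σ (n-1) then extf σ (n-1) - 2 else 0) := by
    intro σ hσ
    have hb : extf σ (n-1) ≤ k := by
      rw [extf_lt σ (show n-1 < n by omega), ← sup_eq_of_mem_SPF hσ]
      exact Finset.le_sup (Finset.mem_univ _)
    have ha : 1 ≤ extf σ (n-2) := by
      rw [extf_lt σ (show n-2 < n by omega)]
      exact (mem_SPF.mp hσ).1 _
    have hrw : ∑ c ∈ Finset.Icc 1 k, nspF (Fin.snoc σ c : Fin (n+1) → ℕ)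
        = ∑ c ∈ Finset.Icc 1 k, (nspF σ +
          if extf σ (n-2) < extf σ (n-1) ∧ c < extf σ (n-1) ∧ extf σ (n-2) ≠ c
            then 1 else 0) := by
      apply Finset.sum_congr rfl
      intro c _
      exact nspF_snoc hn σ c
    rw [hrw, Finset.sum_add_distrib, Finset.sum_const, Nat.card_Icc, Nat.add_sub_cancel,
      smul_eq_mul]
    congr 1
    by_cases hab : extf σ (n-2) < extf σ (n-1)
    · rw [if_pos hab, count_c ha hab hb]
    · rw [if_neg hab]
      apply Finset.sum_eq_zero
      intro c _
      rw [if_neg (fun h => hab h.1)]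
  have h2 : ∀ σ ∈ SPF n (k-1), nspF (Fin.snoc σ (k:ℕ) : Fin (n+1) → ℕ) = nspF σ := by
    intro σ hσ
    rw [nspF_snoc hn σ k]
    have hb : extf σ (n-1) ≤ k - 1 := by
      rw [extf_lt σ (show n-1 < n by omega), ← sup_eq_of_mem_SPF hσ]
      exact Finset.le_sup (Finset.mem_univ _)
    rw [if_neg (fun h => by omega), Nat.add_zero]
  rw [Finset.sum_congr rfl h1, Finset.sum_congr rfl h2, Finset.sum_add_distrib,
    ← Finset.mul_sum]
  rw [Tt, Tt, Aa]
  ring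

lemma Aa_rec {n k : ℕ} (hn : 1 ≤ n) (hk : 1 ≤ k) :
    Aa (n+1) k = (∑ σ ∈ SPF n k, hsum k (extf σ (n-1))) + (k-2) * Wc n (k-1) := by
  rw [Aa, sum_SPF_succ hk
    (fun π => if extf π (n+1-2) < extf π (n+1-1) then extf π (n+1-1) - 2 else 0)]
  have e1 : n + 1 - 2 = n - 1 := by omega
  have e2 : n + 1 - 1 = n := by omega
  have h1 : ∀ σ ∈ SPF n k, (∑ c ∈ Finset.Icc 1 k,
      if extf (Fin.snoc σ c : Fin (n+1) → ℕ) (n+1-2) < extf (Fin.snoc σ c : Fin (n+1) → ℕ) (n+1-1)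
        then extf (Fin.snoc σ c : Fin (n+1) → ℕ) (n+1-1) - 2 else 0)
      = hsum k (extf σ (n-1)) := by
    intro σ hσ
    have hrw : ∀ c, extf (Fin.snoc σ c : Fin (n+1) → ℕ) (n+1-2) = extf σ (n-1) := by
      intro c
      rw [e1, extf_snoc_lt σ c (show n-1 < n by omega)]
    have hrw2 : ∀ c : ℕ, extf (Fin.snoc σ c : Fin (n+1) → ℕ) (n+1-1) = c := by
      intro c
      rw [e2, extf_snoc_last]
    simp only [hrw, hrw2]
    rw [hsum, ← Finset.sum_filter]
    congr 1
    ext c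
    simp only [Finset.mem_filter, Finset.mem_Icc]
    omega
  have h2 : ∀ σ ∈ SPF n (k-1),
      (if extf (Fin.snoc σ (k:ℕ) : Fin (n+1) → ℕ) (n+1-2) <
          extf (Fin.snoc σ (k:ℕ) : Fin (n+1) → ℕ) (n+1-1)
        then extf (Fin.snoc σ (k:ℕ) : Fin (n+1) → ℕ) (n+1-1) - 2 else 0) = k - 2 := by
    intro σ hσ
    have hb : extf σ (n-1) ≤ k - 1 := by
      rw [extf_lt σ (show n-1 < n by omega), ← sup_eq_of_mem_SPF hσ]
      exact Finset.le_sup (Finset.mem_univ _)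
    rw [e1, e2, extf_snoc_last, extf_snoc_lt σ (k:ℕ) (show n-1 < n by omega)]
    rw [if_pos (by omega)]
  rw [Finset.sum_congr rfl h1, Finset.sum_congr rfl h2, Finset.sum_const, smul_eq_mul, Wc]
  ring

noncomputable def Ff (j n k : ℕ) : ℕ := ∑ i ∈ Finset.Icc 3 (n-k), j^(i-3) * Wc (n-i) k

lemma sum_hsum {m k : ℕ} (hm : 1 ≤ m) (hk : 1 ≤ k) :
    ∑ σ ∈ SPF m k, hsum k (extf σ (m-1)) = 2 * Nat.choose k 3 * Wc (m-1) k := by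
  obtain ⟨p, rfl⟩ : ∃ p, m = p + 1 := ⟨m-1, by omega⟩
  rw [sum_SPF_succ hk (fun π => hsum k (extf π (p+1-1)))]
  have h1 : ∀ τ ∈ SPF p k, ∑ t ∈ Finset.Icc 1 k,
      hsum k (extf (Fin.snoc τ t : Fin (p+1) → ℕ) (p+1-1)) = 2 * Nat.choose k 3 := by
    intro τ _
    have he : ∀ t : ℕ, extf (Fin.snoc τ t : Fin (p+1) → ℕ) (p+1-1) = t := by
      intro t
      rw [show p+1-1 = p by omega, extf_snoc_last]
    simp only [he]
    exact sum_hsum_const k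
  have h2 : ∀ τ ∈ SPF p (k-1),
      hsum k (extf (Fin.snoc τ (k:ℕ) : Fin (p+1) → ℕ) (p+1-1)) = 0 := by
    intro τ _
    rw [show p+1-1 = p by omega, extf_snoc_last, hsum_self]
  rw [Finset.sum_congr rfl h1, Finset.sum_congr rfl h2, Finset.sum_const, Finset.sum_const,
    smul_eq_mul, smul_eq_mul, Nat.mul_zero, Nat.add_zero, Nat.add_sub_cancel]
  rw [Wc, mul_comm]

lemma Ff_succ {j n k : ℕ} (hk : 1 ≤ k) :
    Ff j n (k-1) + k * Ff j n k = Ff j (n+1) k := by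
  rw [Ff, Ff, Ff]
  have hr : n - (k-1) = n + 1 - k := by omega
  rw [hr]
  have hext : ∑ i ∈ Finset.Icc 3 (n-k), j^(i-3) * Wc (n-i) k
      = ∑ i ∈ Finset.Icc 3 (n+1-k), j^(i-3) * Wc (n-i) k := by
    rcases le_or_gt 3 (n+1-k) with h | h
    · have hnk : n + 1 - k = (n - k) + 1 := by omega
      rw [hnk, Finset.sum_Icc_succ_top (by omega)]
      have hz : Wc (n - ((n-k)+1)) k = 0 := Wc_eq_zero (by omega)
      rw [hz, Nat.mul_zero, Nat.add_zero]
    · rw [Finset.Icc_eq_empty (by omega), Finset.Icc_eq_empty (by omega)]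
  rw [hext, Finset.mul_sum, ← Finset.sum_add_distrib]
  apply Finset.sum_congr rfl
  intro i hi
  rw [Finset.mem_Icc] at hi
  rw [show n+1-i = (n-i)+1 by omega, Wc_rec hk]
  ring

lemma Ff_occ {n k : ℕ} (hk : 1 ≤ k) (hn : 2 ≤ n) : Ff k n (k-1) = Wc (n-2) k := by
  obtain ⟨k', rfl⟩ : ∃ k', k = k' + 1 := ⟨k-1, by omega⟩
  rw [Wc_first k' (n-2), Ff, Nat.add_sub_cancel]
  have hsub : ∑ i ∈ Finset.Icc 3 (n-k'), (k'+1)^(i-3) * Wc (n-i) k'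
      = ∑ i ∈ Finset.Icc 3 n, (k'+1)^(i-3) * Wc (n-i) k' := by
    apply Finset.sum_subset
    · apply Finset.Icc_subset_Icc_right
      omega
    · intro i hi hni
      rw [Finset.mem_Icc] at hi hni
      have : Wc (n-i) k' = 0 := Wc_eq_zero (by omega)
      rw [this, Nat.mul_zero]
  rw [hsub]
  have hshift : ∀ (g : ℕ → ℕ) (m : ℕ),
      ∑ i ∈ Finset.Icc 3 (m+2), g i = ∑ s ∈ Finset.range m, g (s+3) := by
    intro g m
    induction m with
    | zero => simp
    | succ m ih =>
      rw [show m+1+2 = (m+2)+1 by ring, Finset.sum_Icc_succ_top (by omega), ih,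
        Finset.sum_range_succ, show m+2+1 = m+3 by ring]
  have h2 := hshift (fun i => (k'+1)^(i-3) * Wc (n-i) k') (n-2)
  rw [show (n-2)+2 = n by omega] at h2
  rw [h2]
  apply Finset.sum_congr rfl
  intro s _
  rw [show s+3-3 = s by omega, show n-(s+3) = n-2-1-s by omega]

lemma choose_two_step (k : ℕ) : Nat.choose (k-1) 2 = Nat.choose (k-2) 2 + (k-2) := by
  rcases k with _|_|_|k
  · simp
  · simp
  · simp
  · rw [show k+3-1 = (k+1)+1 by omega, show k+3-2 = k+1 by omega,
      Nat.choose_succ_succ, Nat.choose_one_right, Nat.add_comm]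

lemma Tt_small {n k : ℕ} (hn : n ≤ 2) : Tt n k = 0 := by
  rw [Tt]
  apply Finset.sum_eq_zero
  intro π _
  rw [nspF, show n - 2 = 0 by omega]
  simp

lemma Tt_zero {n : ℕ} (hn : 1 ≤ n) : Tt n 0 = 0 := by
  rw [Tt]
  have h : SPF n 0 = ∅ := Finset.card_eq_zero.mp (Wc_zero_left hn)
  rw [h, Finset.sum_empty]

lemma rhs_small {n k : ℕ} (hn : n ≤ 2) :
    Nat.choose (k-1) 2 * Wc (n-1) k
      + 2 * ∑ j ∈ Finset.Icc 3 k, Nat.choose j 3 * Ff j n k = 0 := by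
  have h2 : ∀ j, Ff j n k = 0 := by
    intro j
    rw [Ff, Finset.Icc_eq_empty (by omega), Finset.sum_empty]
  have h1 : Nat.choose (k-1) 2 * Wc (n-1) k = 0 := by
    rcases le_or_gt k 2 with h | h
    · rw [Nat.choose_eq_zero_of_lt (by omega), Nat.zero_mul]
    · rw [Wc_eq_zero (by omega), Nat.mul_zero]
  rw [h1]
  simp [h2]

lemma main_formula : ∀ n k : ℕ, Tt n k = Nat.choose (k-1) 2 * Wc (n-1) k
    + 2 * ∑ j ∈ Finset.Icc 3 k, Nat.choose j 3 * Ff j n k := by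
  intro n
  induction n with
  | zero =>
    intro k
    rw [Tt_small (by omega), rhs_small (by omega)]
  | succ n IH =>
    intro k
    rcases le_or_gt (n+1) 2 with hsmall | hbig
    · rw [Tt_small hsmall, rhs_small hsmall]
    rcases Nat.eq_zero_or_pos k with rfl | hk
    · rw [Tt_zero (by omega)]
      rw [show (0:ℕ)-1 = 0 by omega, Nat.choose_eq_zero_of_lt (by omega),
        Finset.Icc_eq_empty (by omega), Finset.sum_empty]
      simp
    obtain ⟨m, rfl⟩ : ∃ m, n = m + 1 := ⟨n-1, by omega⟩
    have hm : 1 ≤ m := by omega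
    simp only [Nat.add_sub_cancel]
    have e1 : Tt (m+1+1) k = k * Tt (m+1) k + Tt (m+1) (k-1) + Aa (m+1) k :=
      Tt_rec (by omega) hk
    have e2 : Aa (m+1) k = 2 * Nat.choose k 3 * Wc (m-1) k + (k-2) * Wc m (k-1) := by
      rw [Aa_rec hm hk, sum_hsum hm hk]
    have Hk := IH k
    have Hk1 := IH (k-1)
    simp only [Nat.add_sub_cancel] at Hk Hk1
    have W1 : Wc (m+1) k = k * Wc m k + Wc m (k-1) := Wc_rec hk
    have hsplit2 : ∑ j ∈ Finset.Icc 3 k, Nat.choose j 3 * Ff j (m+1) (k-1)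
        = (∑ j ∈ Finset.Icc 3 (k-1), Nat.choose j 3 * Ff j (m+1) (k-1))
          + Nat.choose k 3 * Ff k (m+1) (k-1) := by
      rcases le_or_gt 3 k with h3 | h3
      · have := Finset.sum_Icc_succ_top (a := 3) (b := k-1)
          (f := fun j => Nat.choose j 3 * Ff j (m+1) (k-1)) (by omega)
        rw [show (k-1)+1 = k by omega] at this
        exact this
      · rw [Finset.Icc_eq_empty (by omega), Finset.Icc_eq_empty (by omega),
          Nat.choose_eq_zero_of_lt (by omega)]
        simp
    have hsplitF : ∑ j ∈ Finset.Icc 3 k, Nat.choose j 3 * Ff j (m+1+1) k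
        = (∑ j ∈ Finset.Icc 3 (k-1), Nat.choose j 3 * Ff j (m+1) (k-1))
          + Nat.choose k 3 * Wc (m-1) k
          + k * ∑ j ∈ Finset.Icc 3 k, Nat.choose j 3 * Ff j (m+1) k := by
      have hterm : ∀ j, Nat.choose j 3 * Ff j (m+1+1) k
          = Nat.choose j 3 * Ff j (m+1) (k-1) + k * (Nat.choose j 3 * Ff j (m+1) k) := by
        intro j
        rw [← Ff_succ (n := m+1) hk]
        ring
      rw [Finset.sum_congr rfl (fun j _ => hterm j), Finset.sum_add_distrib,
        ← Finset.mul_sum, hsplit2, Ff_occ hk (by omega), show m+1-2 = m-1 by omega]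
    rw [show k-1-1 = k-2 by omega] at Hk1
    rw [e1, e2, Hk, Hk1, W1, hsplitF, choose_two_step]
    ring

section Bridge

variable {n : ℕ}

/-- The minimum value of a finset of `Fin n`, as a natural number (`n` for `∅`). -/
def mval {n : ℕ} (B : Finset (Fin n)) : ℕ := n - B.sup (fun x => n - (x:ℕ))

lemma mval_spec {B : Finset (Fin n)} (hB : B.Nonempty) :
    ∃ x ∈ B, (x:ℕ) = mval B ∧ ∀ y ∈ B, (x:ℕ) ≤ (y:ℕ) := by
  obtain ⟨x, hx, hmin⟩ := B.exists_min_image (fun y => (y:ℕ)) hB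
  refine ⟨x, hx, ?_, hmin⟩
  rw [mval]
  have hsup : B.sup (fun y => n - (y:ℕ)) = n - (x:ℕ) := by
    apply le_antisymm
    · rw [Finset.sup_le_iff]
      intro y hy
      have := hmin y hy
      omega
    · exact Finset.le_sup (f := fun y : Fin n => n - (y:ℕ)) hx
  rw [hsup]
  have := x.isLt
  omega

lemma mval_le {B : Finset (Fin n)} {y : Fin n} (hy : y ∈ B) : mval B ≤ (y:ℕ) := by
  obtain ⟨x, hx, hxe, hmin⟩ := mval_spec ⟨y, hy⟩
  have := hmin y hy
  omega

lemma mval_mem {B : Finset (Fin n)} (hB : B.Nonempty) : ∃ x ∈ B, (x:ℕ) = mval B := by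
  obtain ⟨x, hx, hxe, _⟩ := mval_spec hB
  exact ⟨x, hx, hxe⟩

lemma existsUnique_part (P : Finpartition (Finset.univ : Finset (Fin n))) (i : Fin n) :
    ∃! B, B ∈ P.parts ∧ i ∈ B := by
  obtain ⟨B, hB, hiB⟩ := P.exists_mem (Finset.mem_univ i)
  exact ⟨B, ⟨hB, hiB⟩, fun B' hB' => P.eq_of_mem_parts hB'.1 hB hB'.2 hiB⟩

/-- the part containing `i` -/
def partOf (P : Finpartition (Finset.univ : Finset (Fin n))) (i : Fin n) : Finset (Fin n) :=
  Finset.choose _ _ (existsUnique_part P i)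

lemma partOf_mem (P : Finpartition (Finset.univ : Finset (Fin n))) (i : Fin n) :
    partOf P i ∈ P.parts := (Finset.choose_spec (fun B => i ∈ B) _ _).1

lemma mem_partOf (P : Finpartition (Finset.univ : Finset (Fin n))) (i : Fin n) :
    i ∈ partOf P i := (Finset.choose_spec (fun B => i ∈ B) _ _).2

lemma partOf_eq (P : Finpartition (Finset.univ : Finset (Fin n))) {i : Fin n}
    {B : Finset (Fin n)} (hB : B ∈ P.parts) (hi : i ∈ B) : partOf P i = B :=
  P.eq_of_mem_parts (partOf_mem P i) hB (mem_partOf P i) hi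

/-- The canonical word of a finite partition of `Fin n`. -/
def gword (P : Finpartition (Finset.univ : Finset (Fin n))) (i : Fin n) : ℕ :=
  (P.parts.filter (fun B => mval B ≤ mval (partOf P i))).card

lemma mval_injOn (P : Finpartition (Finset.univ : Finset (Fin n))) :
    ∀ B ∈ P.parts, ∀ B' ∈ P.parts, mval B = mval B' → B = B' := by
  intro B hB B' hB' h
  obtain ⟨x, hx, hxe⟩ := mval_mem (P.nonempty_of_mem_parts hB)
  obtain ⟨x', hx', hxe'⟩ := mval_mem (P.nonempty_of_mem_parts hB')
  have hxx : x = x' := Fin.ext (by omega)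
  exact P.eq_of_mem_parts hB hB' hx (hxx ▸ hx')

lemma gcard_lt (P : Finpartition (Finset.univ : Finset (Fin n))) {B B' : Finset (Fin n)}
    (hB' : B' ∈ P.parts) (h : mval B < mval B') :
    (P.parts.filter (fun C => mval C ≤ mval B)).card
      < (P.parts.filter (fun C => mval C ≤ mval B')).card := by
  apply Finset.card_lt_card
  have hsub : P.parts.filter (fun C => mval C ≤ mval B)
      ⊆ P.parts.filter (fun C => mval C ≤ mval B') := by
    intro C hC
    rw [Finset.mem_filter] at *
    exact ⟨hC.1, le_trans hC.2 (le_of_lt h)⟩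
  rw [Finset.ssubset_iff_of_subset hsub]
  refine ⟨B', Finset.mem_filter.mpr ⟨hB', le_refl _⟩, fun hc => ?_⟩
  have := (Finset.mem_filter.mp hc).2
  omega

lemma gword_eq_iff (P : Finpartition (Finset.univ : Finset (Fin n))) {i i' : Fin n} :
    gword P i = gword P i' ↔ partOf P i = partOf P i' := by
  constructor
  · intro h
    by_contra hne
    have hmv : mval (partOf P i) ≠ mval (partOf P i') := fun he =>
      hne (mval_injOn P _ (partOf_mem P i) _ (partOf_mem P i') he)
    rcases lt_or_gt_of_ne hmv with hlt | hlt
    · exact absurd h (Nat.ne_of_lt (gcard_lt P (partOf_mem P i') hlt))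
    · exact absurd h.symm (Nat.ne_of_lt (gcard_lt P (partOf_mem P i) hlt))
  · intro h
    rw [gword, gword, h]

lemma gword_ge_one (P : Finpartition (Finset.univ : Finset (Fin n))) (i : Fin n) :
    1 ≤ gword P i := by
  rw [gword, Nat.one_le_iff_ne_zero, ← Nat.pos_iff_ne_zero, Finset.card_pos]
  exact ⟨partOf P i, Finset.mem_filter.mpr ⟨partOf_mem P i, le_refl _⟩⟩

lemma gword_le_card (P : Finpartition (Finset.univ : Finset (Fin n))) (i : Fin n) :
    gword P i ≤ P.parts.card := Finset.card_filter_le _ _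

lemma gword_at_zero (P : Finpartition (Finset.univ : Finset (Fin n))) (i : Fin n)
    (hi : (i:ℕ) = 0) : gword P i = 1 := by
  have h0 : mval (partOf P i) = 0 := by
    have := mval_le (mem_partOf P i)
    omega
  rw [gword, Finset.card_eq_one]
  refine ⟨partOf P i, ?_⟩
  ext C
  simp only [Finset.mem_filter, Finset.mem_singleton]
  constructor
  · rintro ⟨hC, hle⟩
    refine mval_injOn P C hC _ (partOf_mem P i) (by omega)
  · rintro rfl
    exact ⟨partOf_mem P i, le_refl _⟩

lemma gword_growth (P : Finpartition (Finset.univ : Finset (Fin n))) (i : Fin n)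
    (hi : (i:ℕ) ≠ 0) :
    gword P i ≤ 1 + (Finset.univ.filter (fun j => j < i)).sup (gword P) := by
  obtain ⟨x, hx, hxe, hxmin⟩ := mval_spec (P.nonempty_of_mem_parts (partOf_mem P i))
  have hle : mval (partOf P i) ≤ (i:ℕ) := mval_le (mem_partOf P i)
  rcases lt_or_eq_of_le hle with hlt | heq
  · have hpx : partOf P x = partOf P i := partOf_eq P (partOf_mem P i) hx
    have hgx : gword P x = gword P i := by rw [gword, gword, hpx]
    rw [← hgx]
    have hxi : x < i := by rw [Fin.lt_def]; omega
    have := Finset.le_sup (s := Finset.univ.filter (fun j => j < i)) (f := gword P)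
      (Finset.mem_filter.mpr ⟨Finset.mem_univ x, hxi⟩)
    omega
  · have hsplit : P.parts.filter (fun C => mval C ≤ mval (partOf P i))
        = insert (partOf P i) (P.parts.filter (fun C => mval C < mval (partOf P i))) := by
      ext C
      simp only [Finset.mem_filter, Finset.mem_insert]
      constructor
      · rintro ⟨hC, hle'⟩
        rcases lt_or_eq_of_le hle' with h | h
        · right; exact ⟨hC, h⟩
        · left; exact mval_injOn P C hC _ (partOf_mem P i) h
      · rintro (rfl | ⟨hC, hlt'⟩)
        · exact ⟨partOf_mem P i, le_refl _⟩
        · exact ⟨hC, le_of_lt hlt'⟩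
    rw [gword, hsplit, Finset.card_insert_of_notMem (by simp)]
    rcases Finset.eq_empty_or_nonempty
        (P.parts.filter (fun C => mval C < mval (partOf P i))) with he | hne
    · rw [he, Finset.card_empty]
      omega
    · obtain ⟨C₀, hC₀mem, hC₀max⟩ := Finset.exists_max_image _ mval hne
      have hC₀ := Finset.mem_filter.mp hC₀mem
      obtain ⟨y, hy, hye, _⟩ := mval_spec (P.nonempty_of_mem_parts hC₀.1)
      have hyi : y < i := by rw [Fin.lt_def]; omega
      have hgy : gword P y = (P.parts.filter (fun C => mval C ≤ mval C₀)).card := by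
        rw [gword, partOf_eq P hC₀.1 hy]
      have hsub : P.parts.filter (fun C => mval C < mval (partOf P i))
          ⊆ P.parts.filter (fun C => mval C ≤ mval C₀) := by
        intro C hC
        rw [Finset.mem_filter] at hC ⊢
        exact ⟨hC.1, hC₀max C (Finset.mem_filter.mpr hC)⟩
      have hcard := Finset.card_le_card hsub
      have hsup := Finset.le_sup (s := Finset.univ.filter (fun j => j < i)) (f := gword P)
        (Finset.mem_filter.mpr ⟨Finset.mem_univ y, hyi⟩)
      omega

lemma gword_sup (P : Finpartition (Finset.univ : Finset (Fin n))) :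
    Finset.univ.sup (gword P) = P.parts.card := by
  rcases Nat.eq_zero_or_pos n with hn | hn
  · subst hn
    have hparts : P.parts = ∅ := by
      rcases Finset.eq_empty_or_nonempty P.parts with h | h
      · exact h
      · exfalso
        obtain ⟨B, hB⟩ := h
        obtain ⟨x, _⟩ := P.nonempty_of_mem_parts hB
        exact x.elim0
    rw [hparts]
    simp
  · apply le_antisymm
    · rw [Finset.sup_le_iff]
      intro i _
      exact gword_le_card P i
    · obtain ⟨Bm, hBm, hmax⟩ := Finset.exists_max_image P.parts mval
        ⟨partOf P ⟨0, hn⟩, partOf_mem P ⟨0, hn⟩⟩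
      obtain ⟨x, hx, hxe⟩ := mval_mem (P.nonempty_of_mem_parts hBm)
      have hpx : partOf P x = Bm := partOf_eq P hBm hx
      have hgx : gword P x = P.parts.card := by
        rw [gword, hpx, Finset.filter_true_of_mem (fun C hC => hmax C hC)]
      rw [← hgx]
      exact Finset.le_sup (Finset.mem_univ x)

lemma gword_mem (P : Finpartition (Finset.univ : Finset (Fin n))) :
    gword P ∈ SetPartitionWords n P.parts.card :=
  ⟨gword_ge_one P, gword_at_zero P, gword_growth P, gword_sup P⟩

/-- fibers of a word -/
def fiber {n : ℕ} (π : Fin n → ℕ) (b : ℕ) : Finset (Fin n) :=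
  Finset.univ.filter (fun i => π i = b)

lemma SPW_downward {k : ℕ} {π : Fin n → ℕ} (hπ : π ∈ SetPartitionWords n k) :
    ∀ i : Fin n, ∀ v, 1 ≤ v → v ≤ π i → ∃ j : Fin n, j ≤ i ∧ π j = v := by
  obtain ⟨h1, h2, h3, h4⟩ := hπ
  have key : ∀ m : ℕ, ∀ i : Fin n, (i:ℕ) = m → ∀ v, 1 ≤ v → v ≤ π i →
      ∃ j, j ≤ i ∧ π j = v := by
    intro m
    induction m using Nat.strong_induction_on with
    | _ m IH =>
      intro i him v hv1 hv2
      rcases eq_or_lt_of_le hv2 with heq | hlt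
      · exact ⟨i, le_refl i, heq.symm⟩
      · have hi0 : (i:ℕ) ≠ 0 := by
          intro h0
          have := h2 i h0
          omega
        have hgrow := h3 i hi0
        have hsup : v ≤ (Finset.univ.filter (fun j => j < i)).sup π := by omega
        obtain ⟨j, hj, hjv⟩ := (Finset.le_sup_iff (by simp only [Nat.bot_eq_zero]; omega)).mp hsup
        rw [Finset.mem_filter] at hj
        have hjm : (j:ℕ) < m := by rw [← him]; exact hj.2
        obtain ⟨j', hj', hje⟩ := IH (j:ℕ) hjm j rfl v hv1 hjv
        exact ⟨j', le_trans hj' (le_of_lt hj.2), hje⟩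
  intro i
  exact key (i:ℕ) i rfl

lemma SPW_surj {k : ℕ} {π : Fin n → ℕ} (hπ : π ∈ SetPartitionWords n k) {b : ℕ}
    (hb1 : 1 ≤ b) (hbk : b ≤ k) : ∃ i, π i = b := by
  have h4 := hπ.2.2.2
  have hs : b ≤ Finset.univ.sup π := by rw [h4]; exact hbk
  obtain ⟨i, _, hib⟩ := (Finset.le_sup_iff (by simp only [Nat.bot_eq_zero]; omega)).mp hs
  obtain ⟨j, _, hj⟩ := SPW_downward hπ i b hb1 hib
  exact ⟨j, hj⟩

lemma SPW_le {k : ℕ} {π : Fin n → ℕ} (hπ : π ∈ SetPartitionWords n k) (i : Fin n) :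
    π i ≤ k := by
  have h4 := hπ.2.2.2
  rw [← h4]
  exact Finset.le_sup (Finset.mem_univ i)

/-- the partition associated to a restricted growth word -/
def fpart {k : ℕ} (π : Fin n → ℕ) (hπ : π ∈ SetPartitionWords n k) :
    Finpartition (Finset.univ : Finset (Fin n)) where
  parts := (Finset.Icc 1 k).image (fiber π)
  supIndep := by
    rw [Finset.supIndep_iff_pairwiseDisjoint]
    intro B hB B' hB' hne
    simp only [Finset.coe_image, Set.mem_image, Finset.mem_coe] at hB hB'
    obtain ⟨b, _, rfl⟩ := hB
    obtain ⟨b', _, rfl⟩ := hB'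
    rw [Function.onFun, Finset.disjoint_left]
    intro i hi hi'
    rw [id_eq, fiber, Finset.mem_filter] at hi hi'
    exact hne (by rw [← hi.2, ← hi'.2])
  sup_parts := by
    apply le_antisymm
    · exact Finset.sup_le (fun B _ => Finset.subset_univ B)
    · intro i _
      rw [Finset.mem_sup]
      refine ⟨fiber π (π i), Finset.mem_image.mpr ⟨π i, ?_, rfl⟩, ?_⟩
      · exact Finset.mem_Icc.mpr ⟨hπ.1 i, SPW_le hπ i⟩
      · simp only [id_eq, fiber, Finset.mem_filter]
        simp
  bot_notMem := by
    intro hbot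
    obtain ⟨b, hb, hfib⟩ := Finset.mem_image.mp hbot
    rw [Finset.mem_Icc] at hb
    obtain ⟨i, hi⟩ := SPW_surj hπ hb.1 hb.2
    have : i ∈ fiber π b := Finset.mem_filter.mpr ⟨Finset.mem_univ i, hi⟩
    rw [hfib] at this
    exact absurd this (Finset.notMem_empty i)

lemma fpart_parts {k : ℕ} (π : Fin n → ℕ) (hπ : π ∈ SetPartitionWords n k) :
    (fpart π hπ).parts = (Finset.Icc 1 k).image (fiber π) := rfl

lemma fiber_injOn {k : ℕ} {π : Fin n → ℕ} (hπ : π ∈ SetPartitionWords n k) :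
    Set.InjOn (fiber π) ↑(Finset.Icc 1 k) := by
  intro b hb b' hb' he
  rw [Finset.mem_coe, Finset.mem_Icc] at hb hb'
  obtain ⟨i, hi⟩ := SPW_surj hπ hb.1 hb.2
  have h1 : i ∈ fiber π b := Finset.mem_filter.mpr ⟨Finset.mem_univ i, hi⟩
  rw [he] at h1
  have h2 := (Finset.mem_filter.mp h1).2
  omega

lemma fpart_card {k : ℕ} (π : Fin n → ℕ) (hπ : π ∈ SetPartitionWords n k) :
    (fpart π hπ).parts.card = k := by
  rw [fpart_parts, Finset.card_image_of_injOn (fiber_injOn hπ), Nat.card_Icc]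
  omega

lemma firstocc_strict {k : ℕ} {π : Fin n → ℕ} (hπ : π ∈ SetPartitionWords n k)
    {b b' : ℕ} (hb1 : 1 ≤ b) (hbb : b < b') (hb'k : b' ≤ k) :
    mval (fiber π b) < mval (fiber π b') := by
  obtain ⟨h1, h2, h3, h4⟩ := hπ
  obtain ⟨z, hz⟩ := SPW_surj ⟨h1, h2, h3, h4⟩ (show 1 ≤ b' by omega) hb'k
  have hne' : (fiber π b').Nonempty := ⟨z, Finset.mem_filter.mpr ⟨Finset.mem_univ z, hz⟩⟩
  obtain ⟨x', hx', hxe', hmin'⟩ := mval_spec hne'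
  have hπx' : π x' = b' := (Finset.mem_filter.mp hx').2
  have hx'0 : (x':ℕ) ≠ 0 := by
    intro h0
    have := h2 x' h0
    omega
  have hgrow := h3 x' hx'0
  have hsup : b ≤ (Finset.univ.filter (fun j => j < x')).sup π := by omega
  obtain ⟨j, hj, hjb⟩ := (Finset.le_sup_iff (by simp only [Nat.bot_eq_zero]; omega)).mp hsup
  rw [Finset.mem_filter] at hj
  obtain ⟨j', hj'le, hj'⟩ := SPW_downward ⟨h1, h2, h3, h4⟩ j b hb1 hjb
  have hjfib : j' ∈ fiber π b := Finset.mem_filter.mpr ⟨Finset.mem_univ j', hj'⟩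
  have h5 : mval (fiber π b) ≤ (j':ℕ) := mval_le hjfib
  have h6 : (j':ℕ) ≤ (j:ℕ) := hj'le
  have h7 : (j:ℕ) < (x':ℕ) := hj.2
  omega

lemma gword_fpart {k : ℕ} (π : Fin n → ℕ) (hπ : π ∈ SetPartitionWords n k) :
    gword (fpart π hπ) = π := by
  funext i
  have hpi1 : 1 ≤ π i := hπ.1 i
  have hpik : π i ≤ k := SPW_le hπ i
  have hifib : i ∈ fiber π (π i) := Finset.mem_filter.mpr ⟨Finset.mem_univ i, rfl⟩
  have hfibmem : fiber π (π i) ∈ (fpart π hπ).parts :=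
    Finset.mem_image.mpr ⟨π i, Finset.mem_Icc.mpr ⟨hpi1, hpik⟩, rfl⟩
  have hpartOf : partOf (fpart π hπ) i = fiber π (π i) := partOf_eq _ hfibmem hifib
  rw [gword, hpartOf, fpart_parts, Finset.filter_image,
    Finset.card_image_of_injOn ((fiber_injOn hπ).mono (Finset.filter_subset _ _))]
  have hfe : Finset.filter (fun b => mval (fiber π b) ≤ mval (fiber π (π i)))
      (Finset.Icc 1 k) = Finset.Icc 1 (π i) := by
    ext b
    simp only [Finset.mem_filter, Finset.mem_Icc]
    constructor
    · rintro ⟨⟨hb1, hbk⟩, hle⟩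
      refine ⟨hb1, ?_⟩
      by_contra hgt
      have := firstocc_strict hπ hpi1 (show π i < b by omega) hbk
      omega
    · rintro ⟨hb1, hbpi⟩
      refine ⟨⟨hb1, le_trans hbpi hpik⟩, ?_⟩
      rcases eq_or_lt_of_le hbpi with rfl | hlt
      · exact le_refl _
      · exact le_of_lt (firstocc_strict hπ hb1 hlt hpik)
  rw [hfe, Nat.card_Icc]
  omega

lemma fpart_gword (P : Finpartition (Finset.univ : Finset (Fin n)))
    (h : gword P ∈ SetPartitionWords n P.parts.card) :
    fpart (gword P) h = P := by
  apply Finpartition.ext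
  apply Finset.eq_of_subset_of_card_le
  · intro B hB
    obtain ⟨b, hb, rfl⟩ := Finset.mem_image.mp hB
    rw [Finset.mem_Icc] at hb
    obtain ⟨i, hi⟩ := SPW_surj (gword_mem P) hb.1 hb.2
    have hfib : fiber (gword P) b = partOf P i := by
      ext i'
      rw [fiber, Finset.mem_filter]
      constructor
      · rintro ⟨_, hgi'⟩
        have : partOf P i' = partOf P i := by
          rw [← gword_eq_iff P]
          omega
        rw [← this]
        exact mem_partOf P i'
      · intro hmem
        refine ⟨Finset.mem_univ i', ?_⟩
        have : partOf P i' = partOf P i := partOf_eq P (partOf_mem P i) hmem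
        have := (gword_eq_iff P).mpr this
        omega
    rw [hfib]
    exact partOf_mem P i
  · rw [fpart_card]

lemma stirling_eq_Wc (n k : ℕ) : stirlingS2 n k = Wc n k := by
  have h1 : Nat.card ↥(SetPartitionWords n k) = Wc n k := by
    rw [Nat.card_coe_set_eq, ← coe_SPF, Set.ncard_coe_finset, Wc]
  rw [stirlingS2, ← h1]
  apply Nat.card_congr
  refine ⟨fun P => ⟨gword P.1, by have h := gword_mem P.1; rwa [P.2] at h⟩,
    fun π => ⟨fpart π.1 π.2, fpart_card π.1 π.2⟩, ?_, ?_⟩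
  · rintro ⟨P, hP⟩
    apply Subtype.ext
    simp only
    subst hP
    exact fpart_gword P (gword_mem P)
  · rintro ⟨π, hπ⟩
    apply Subtype.ext
    simp only
    exact gword_fpart π _

end Bridge

end NSP

/-- The total number of non-symmetric peaks over all set partitions of `[n]`
with exactly `k` blocks equals
`C(k−1,2)·S(n−1,k) + 2·Σ_{j=3}^{k} C(j,3) Σ_{i=3}^{n−k} j^{i−3} S(n−i,k)`. -/
theorem total_nonsympeak_eq (n k : ℕ) (hk : 1 ≤ k) (hkn : k ≤ n) :
    (∑ᶠ π ∈ SetPartitionWords n k, nonsympeak π) =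
      Nat.choose (k - 1) 2 * stirlingS2 (n - 1) k +
        2 * ∑ j ∈ Finset.Icc 3 k, Nat.choose j 3 *
          ∑ i ∈ Finset.Icc 3 (n - k), j ^ (i - 3) * stirlingS2 (n - i) k := by
  have h1 : (∑ᶠ π ∈ SetPartitionWords n k, nonsympeak π) = NSP.Tt n k := by
    rw [← NSP.coe_SPF n k, finsum_mem_coe_finset, NSP.Tt]
    exact Finset.sum_congr rfl (fun π _ => NSP.nonsympeak_eq_nspF π)
  rw [h1, NSP.main_formula n k]
  simp only [NSP.stirling_eq_Wc, NSP.Ff]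
end

section
/- For all integers n and k with 1 ≤ k ≤ n, the number of pairs (π, ℓ), where π ∈ P_{n,k} is a set partition of [n] with exactly k blocks in canonical sequential form and ℓ is a position of a symmetric peak of π (π_ℓ < π_{ℓ+1} > π_{ℓ+2} and π_ℓ = π_{ℓ+2}) such that π_{ℓ+1} is a record of π (π_{ℓ+1} > π_j for all j < ℓ+1), equals (k−1)·S(n−1,k), where S(n−1,k) is the Stirling number of the second kind. -/
open scoped BigOperators

namespace SPW

open Finset

variable {m k : ℕ}

/-- prefix sup with a natural-number threshold -/
def nsup (w : Fin m → ℕ) (t : ℕ) : ℕ :=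
  (Finset.univ.filter (fun j : Fin m => (j : ℕ) < t)).sup w

lemma psup_eq (w : Fin m → ℕ) (i : Fin m) :
    (Finset.univ.filter (fun j : Fin m => j < i)).sup w = nsup w (i : ℕ) := by
  unfold nsup
  congr 1

lemma le_nsup {w : Fin m → ℕ} {t : ℕ} {j : Fin m} (hj : (j : ℕ) < t) :
    w j ≤ nsup w t :=
  Finset.le_sup (by simp [hj])

lemma nsup_le {w : Fin m → ℕ} {t c : ℕ} (h : ∀ j : Fin m, (j : ℕ) < t → w j ≤ c) :
    nsup w t ≤ c :=
  Finset.sup_le (fun j hj => h j (by simpa using hj))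

lemma exists_of_le_nsup {w : Fin m → ℕ} {t v : ℕ} (hv : 1 ≤ v) (h : v ≤ nsup w t) :
    ∃ j : Fin m, (j : ℕ) < t ∧ v ≤ w j := by
  obtain ⟨j, hj, hvj⟩ := (Finset.le_sup_iff (by omega : (0:ℕ) < v)).1 h
  exact ⟨j, by simpa using hj, hvj⟩

lemma words_iff {π : Fin m → ℕ} : π ∈ SetPartitionWords m k ↔
    (∀ i, 1 ≤ π i) ∧
    (∀ i : Fin m, (i : ℕ) = 0 → π i = 1) ∧
    (∀ i : Fin m, (i : ℕ) ≠ 0 → π i ≤ 1 + nsup π (i : ℕ)) ∧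
    Finset.univ.sup π = k := by
  unfold SetPartitionWords
  simp only [Set.mem_setOf_eq, psup_eq]

variable {π : Fin m → ℕ}

lemma attain (hπ : π ∈ SetPartitionWords m k) :
    ∀ (i : Fin m) (v : ℕ), 1 ≤ v → v ≤ π i → ∃ j : Fin m, (j : ℕ) ≤ (i : ℕ) ∧ π j = v := by
  rw [words_iff] at hπ
  obtain ⟨h1, h0, hg, _⟩ := hπ
  have main : ∀ (N : ℕ) (i : Fin m), (i : ℕ) ≤ N → ∀ v, 1 ≤ v → v ≤ π i →
      ∃ j : Fin m, (j : ℕ) ≤ (i : ℕ) ∧ π j = v := by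
    intro N
    induction N with
    | zero =>
      intro i hi v hv hvi
      have : π i = 1 := h0 i (by omega)
      exact ⟨i, le_refl _, by omega⟩
    | succ N ih =>
      intro i hi v hv hvi
      rcases eq_or_lt_of_le hvi with heq | hlt
      · exact ⟨i, le_refl _, heq.symm⟩
      · by_cases hi0 : (i : ℕ) = 0
        · have := h0 i hi0; omega
        · have hgi := hg i hi0
          have hsup : v ≤ nsup π (i : ℕ) := by omega
          obtain ⟨j, hj, hvj⟩ := exists_of_le_nsup hv hsup
          obtain ⟨j', hj', hj'v⟩ := ih j (by omega) v hv hvj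
          exact ⟨j', by omega, hj'v⟩
  intro i; exact main (i : ℕ) i le_rfl

lemma val_le (hπ : π ∈ SetPartitionWords m k) (i : Fin m) : π i ≤ k := by
  rw [words_iff] at hπ
  exact hπ.2.2.2 ▸ Finset.le_sup (mem_univ i)

lemma val_pos (hπ : π ∈ SetPartitionWords m k) (i : Fin m) : 1 ≤ π i :=
  (words_iff.1 hπ).1 i

lemma surj (hπ : π ∈ SetPartitionWords m k) (hk : 1 ≤ k) :
    ∀ v, 1 ≤ v → v ≤ k → ∃ i, π i = v := by
  intro v hv hvk
  have hsup : Finset.univ.sup π = k := (words_iff.1 hπ).2.2.2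
  obtain ⟨i, _, hi⟩ := (Finset.le_sup_iff (by omega : (0:ℕ) < k)).1 hsup.ge
  have : π i = k := le_antisymm (val_le hπ i) hi
  obtain ⟨j, _, hj⟩ := attain hπ i v hv (by omega)
  exact ⟨j, hj⟩

/-- in an RGF, every entry before the first occurrence of `v` is `< v`. -/
lemma lt_of_before_first (hπ : π ∈ SetPartitionWords m k) {i₀ : Fin m} {v : ℕ}
    (hv : 1 ≤ v) (hfirst : ∀ j : Fin m, (j : ℕ) < (i₀ : ℕ) → π j ≠ v) :
    ∀ j : Fin m, (j : ℕ) < (i₀ : ℕ) → π j < v := by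
  intro j hj
  rcases lt_or_ge (π j) v with h | h
  · exact h
  · obtain ⟨j', hj', hj'v⟩ := attain hπ j v hv h
    exact absurd hj'v (hfirst j' (by omega))

/-! ### Fibers -/

def fiber (π : Fin m → ℕ) (v : ℕ) : Finset (Fin m) :=
  Finset.univ.filter (fun i => π i = v)

lemma mem_fiber {v : ℕ} {i : Fin m} : i ∈ fiber π v ↔ π i = v := by simp [fiber]

lemma fiber_disjoint {u v : ℕ} (h : u ≠ v) : Disjoint (fiber π u) (fiber π v) := by
  rw [Finset.disjoint_left]
  intro i hi hi'
  rw [mem_fiber] at hi hi'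
  omega

lemma fiber_nonempty (hπ : π ∈ SetPartitionWords m k) (hk : 1 ≤ k) {v : ℕ}
    (hv : v ∈ Finset.Icc 1 k) : (fiber π v).Nonempty := by
  rw [Finset.mem_Icc] at hv
  obtain ⟨i, hi⟩ := surj hπ hk v hv.1 hv.2
  exact ⟨i, mem_fiber.2 hi⟩

lemma fiber_injOn (hπ : π ∈ SetPartitionWords m k) (hk : 1 ≤ k) :
    Set.InjOn (fiber π) (Finset.Icc 1 k) := by
  intro u hu v hv huv
  by_contra hne
  obtain ⟨i, hi⟩ := fiber_nonempty hπ hk (by simpa using hu)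
  have hi' : i ∈ fiber π v := huv ▸ hi
  rw [mem_fiber] at hi hi'
  omega

/-- the first occurrence of a smaller value comes earlier -/
lemma fiber_min_lt (hπ : π ∈ SetPartitionWords m k) (hk : 1 ≤ k) {u v : ℕ}
    (hu : 1 ≤ u) (huv : u < v) (hv : v ≤ k)
    (hnu : (fiber π u).Nonempty) (hnv : (fiber π v).Nonempty) :
    (fiber π u).min' hnu < (fiber π v).min' hnv := by
  set i := (fiber π v).min' hnv with hidef
  have hiv : π i = v := mem_fiber.1 ((fiber π v).min'_mem hnv)
  have hfirst : ∀ j : Fin m, (j : ℕ) < (i : ℕ) → π j ≠ v := by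
    intro j hj hjv
    have := (fiber π v).min'_le j (mem_fiber.2 hjv)
    rw [← hidef] at this
    exact absurd hj (by simpa using (Nat.not_lt_of_le (Fin.le_def.1 this)))
  have hi0 : (i : ℕ) ≠ 0 := by
    intro h0
    have := (words_iff.1 hπ).2.1 i h0
    omega
  have hgi := (words_iff.1 hπ).2.2.1 i hi0
  have hsup : u ≤ nsup π (i : ℕ) := by omega
  obtain ⟨j, hj, hvj⟩ := exists_of_le_nsup hu hsup
  obtain ⟨j', hj', hj'u⟩ := attain hπ j u hu hvj
  have : (fiber π u).min' hnu ≤ j' := (fiber π u).min'_le j' (mem_fiber.2 hj'u)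
  rw [Fin.lt_def]
  have := Fin.le_def.1 this
  omega

end SPW

namespace SPW2
open Finset SPW

variable {m k : ℕ}

/-- The finpartition of `Fin m` induced by a set-partition word. -/
def toPart (π : Fin m → ℕ) (hπ : π ∈ SetPartitionWords m k) (hk : 1 ≤ k) :
    Finpartition (Finset.univ : Finset (Fin m)) where
  parts := (Finset.Icc 1 k).image (fiber π)
  supIndep := by
    rw [Finset.supIndep_iff_pairwiseDisjoint]
    intro b hb c hc hbc
    simp only [coe_image, Set.mem_image, mem_coe] at hb hc
    obtain ⟨u, hu, rfl⟩ := hb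
    obtain ⟨v, hv, rfl⟩ := hc
    have : u ≠ v := fun h => hbc (h ▸ rfl)
    exact fiber_disjoint this
  sup_parts := by
    apply Finset.Subset.antisymm
    · exact fun i _ => mem_univ i
    · intro i _
      rw [Finset.mem_sup]
      refine ⟨fiber π (π i), Finset.mem_image_of_mem _ ?_, mem_fiber.2 rfl⟩
      rw [Finset.mem_Icc]
      exact ⟨val_pos hπ i, val_le hπ i⟩
  bot_notMem := by
    simp only [bot_eq_empty, Finset.mem_image]
    rintro ⟨v, hv, hfv⟩
    obtain ⟨i, hi⟩ := fiber_nonempty hπ hk hv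
    rw [hfv] at hi
    exact absurd hi (Finset.notMem_empty i)

lemma toPart_parts_card (π : Fin m → ℕ) (hπ : π ∈ SetPartitionWords m k) (hk : 1 ≤ k) :
    (toPart π hπ hk).parts.card = k := by
  show ((Finset.Icc 1 k).image (fiber π)).card = k
  rw [Finset.card_image_of_injOn (by exact_mod_cast fiber_injOn hπ hk), Nat.card_Icc]
  omega

lemma toPart_part_eq (π : Fin m → ℕ) (hπ : π ∈ SetPartitionWords m k) (hk : 1 ≤ k) (i : Fin m) :
    (toPart π hπ hk).part i = fiber π (π i) := by
  apply Finpartition.part_eq_of_mem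
  · exact Finset.mem_image_of_mem _ (Finset.mem_Icc.2 ⟨val_pos hπ i, val_le hπ i⟩)
  · exact mem_fiber.2 rfl

end SPW2

namespace SPW2
open Finset SPW

variable {m k : ℕ}

/-- The canonical word of a finpartition: `i ↦` the number of parts whose
minimum is at most the minimum of the part containing `i`. -/
def plabel (P : Finpartition (Finset.univ : Finset (Fin m))) (i : Fin m) : ℕ :=
  (P.parts.filter fun b => b.min ≤ (P.part i).min).card

variable {P : Finpartition (Finset.univ : Finset (Fin m))}

lemma exists_min_mem {b : Finset (Fin m)} (hb : b ∈ P.parts) :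
    ∃ x : Fin m, b.min = (x : WithTop (Fin m)) ∧ x ∈ b := by
  obtain ⟨x, hx⟩ := Finset.min_of_mem (P.nonempty_of_mem_parts hb).choose_spec
  exact ⟨x, hx, Finset.mem_of_min hx⟩

lemma min_injOn_parts {b c : Finset (Fin m)} (hb : b ∈ P.parts) (hc : c ∈ P.parts)
    (h : b.min = c.min) : b = c := by
  obtain ⟨x, hx, hxb⟩ := exists_min_mem hb
  have hxc : x ∈ c := Finset.mem_of_min (h ▸ hx)
  exact P.eq_of_mem_parts hb hc hxb hxc

lemma part_mem' (i : Fin m) : P.part i ∈ P.parts := P.part_mem.2 (mem_univ i)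

lemma mem_part' (i : Fin m) : i ∈ P.part i := P.mem_part (mem_univ i)

lemma part_min_le (i : Fin m) : (P.part i).min ≤ (i : WithTop (Fin m)) :=
  Finset.min_le (mem_part' i)

lemma plabel_pos (i : Fin m) : 1 ≤ plabel P i := by
  exact Finset.card_pos.2 ⟨P.part i, Finset.mem_filter.2 ⟨part_mem' i, le_refl _⟩⟩

lemma plabel_le (i : Fin m) : plabel P i ≤ P.parts.card :=
  Finset.card_le_card (Finset.filter_subset _ _)

lemma plabel_congr {i j : Fin m} (h : P.part i = P.part j) : plabel P i = plabel P j := by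
  unfold plabel; rw [h]

lemma part_eq_of_plabel_eq {i j : Fin m} (h : plabel P i = plabel P j) :
    P.part i = P.part j := by
  rcases le_total ((P.part i).min) ((P.part j).min) with hle | hle
  · -- filter_i ⊆ filter_j, equal cards
    have hsub : (P.parts.filter fun b => b.min ≤ (P.part i).min) ⊆
        (P.parts.filter fun b => b.min ≤ (P.part j).min) := by
      intro b hb
      rw [Finset.mem_filter] at hb ⊢
      exact ⟨hb.1, le_trans hb.2 hle⟩
    have heq := Finset.eq_of_subset_of_card_le hsub (le_of_eq h.symm)
    have : P.part j ∈ (P.parts.filter fun b => b.min ≤ (P.part i).min) := by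
      rw [heq]; exact Finset.mem_filter.2 ⟨part_mem' j, le_refl _⟩
    have hji : (P.part j).min ≤ (P.part i).min := (Finset.mem_filter.1 this).2
    exact (min_injOn_parts (part_mem' i) (part_mem' j) (le_antisymm hle hji)).symm ▸ rfl
  · have hsub : (P.parts.filter fun b => b.min ≤ (P.part j).min) ⊆
        (P.parts.filter fun b => b.min ≤ (P.part i).min) := by
      intro b hb
      rw [Finset.mem_filter] at hb ⊢
      exact ⟨hb.1, le_trans hb.2 hle⟩
    have heq := Finset.eq_of_subset_of_card_le hsub (le_of_eq h)
    have : P.part i ∈ (P.parts.filter fun b => b.min ≤ (P.part j).min) := by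
      rw [heq]; exact Finset.mem_filter.2 ⟨part_mem' i, le_refl _⟩
    have hij : (P.part i).min ≤ (P.part j).min := (Finset.mem_filter.1 this).2
    exact min_injOn_parts (part_mem' i) (part_mem' j) (le_antisymm hij hle)

end SPW2

namespace SPW2
open Finset SPW

variable {m k : ℕ} {P : Finpartition (Finset.univ : Finset (Fin m))}

lemma plabel_zero {i : Fin m} (hi : (i : ℕ) = 0) : plabel P i = 1 := by
  have hset : (P.parts.filter fun b => b.min ≤ (P.part i).min) = {P.part i} := by
    ext b
    rw [Finset.mem_filter, Finset.mem_singleton]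
    constructor
    · rintro ⟨hb, hble⟩
      obtain ⟨x, hx, hxb⟩ := exists_min_mem hb
      have hxi : (x : WithTop (Fin m)) ≤ (i : WithTop (Fin m)) :=
        le_trans (hx ▸ hble) (part_min_le i)
      have : x = i := by
        have h1 : x ≤ i := WithTop.coe_le_coe.1 hxi
        have h2 : i ≤ x := by rw [Fin.le_def]; omega
        exact le_antisymm h1 h2
      exact (P.part_eq_of_mem hb (this ▸ hxb)).symm
    · rintro rfl
      exact ⟨part_mem' i, le_refl _⟩
  unfold plabel
  rw [hset, Finset.card_singleton]

lemma plabel_growth {i : Fin m} (hi : (i : ℕ) ≠ 0) :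
    plabel P i ≤ 1 + nsup (plabel P) (i : ℕ) := by
  set c := plabel P i with hc
  rcases le_or_gt c 1 with hc1 | hc2
  · omega
  · -- find j < i with plabel P j = c - 1
    set S := (P.parts.filter fun b => b.min ≤ (P.part i).min) with hS
    have hpartS : P.part i ∈ S := Finset.mem_filter.2 ⟨part_mem' i, le_refl _⟩
    set S' := S.erase (P.part i) with hS'
    have hcardS' : S'.card = c - 1 := by
      rw [hS', Finset.card_erase_of_mem hpartS]
      rfl
    have hS'ne : S'.Nonempty := by
      rw [← Finset.card_pos, hcardS']; omega
    obtain ⟨b', hb'S', hmax⟩ := Finset.exists_max_image S' Finset.min hS'ne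
    have hb'ne : b' ≠ P.part i := Finset.ne_of_mem_erase hb'S'
    have hb'S : b' ∈ S := Finset.mem_of_mem_erase hb'S'
    have hb'parts : b' ∈ P.parts := (Finset.mem_filter.1 hb'S).1
    have hb'le : b'.min ≤ (P.part i).min := (Finset.mem_filter.1 hb'S).2
    have hb'lt : b'.min < (P.part i).min := by
      rcases lt_or_eq_of_le hb'le with h | h
      · exact h
      · exact absurd (min_injOn_parts hb'parts (part_mem' i) h) hb'ne
    obtain ⟨x', hx', hx'b'⟩ := exists_min_mem hb'parts
    have hpartj : P.part x' = b' := P.part_eq_of_mem hb'parts hx'b'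
    have hji : (x' : ℕ) < (i : ℕ) := by
      have h1 : (x' : WithTop (Fin m)) < (i : WithTop (Fin m)) :=
        lt_of_lt_of_le (hx' ▸ hb'lt) (part_min_le i)
      have := WithTop.coe_lt_coe.1 h1
      exact Fin.lt_def.1 this
    have hfj : (P.parts.filter fun b => b.min ≤ (P.part x').min) = S' := by
      ext b
      rw [Finset.mem_filter, hS', Finset.mem_erase, hS, Finset.mem_filter, hpartj]
      constructor
      · rintro ⟨hb, hble⟩
        refine ⟨?_, hb, le_trans hble hb'le⟩
        rintro rfl
        exact absurd (le_antisymm hble hb'le).symm (fun h => hb'ne (min_injOn_parts hb'parts hb h))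
      · rintro ⟨hne, hb, hble⟩
        exact ⟨hb, hmax b (Finset.mem_erase.2 ⟨hne, Finset.mem_filter.2 ⟨hb, hble⟩⟩)⟩
    have hlabelj : plabel P x' = c - 1 := by
      unfold plabel
      rw [hfj, hcardS']
    have : c - 1 ≤ nsup (plabel P) (i : ℕ) := hlabelj ▸ le_nsup hji
    omega

lemma plabel_sup (hcard : P.parts.card = k) (hk : 1 ≤ k) :
    Finset.univ.sup (plabel P) = k := by
  apply le_antisymm
  · exact Finset.sup_le (fun i _ => hcard ▸ plabel_le i)
  · have hne : P.parts.Nonempty := by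
      rw [← Finset.card_pos, hcard]; omega
    obtain ⟨b, hbp, hmax⟩ := Finset.exists_max_image P.parts Finset.min hne
    obtain ⟨x, hx, hxb⟩ := exists_min_mem hbp
    have hpart : P.part x = b := P.part_eq_of_mem hbp hxb
    have : (P.parts.filter fun c => c.min ≤ (P.part x).min) = P.parts := by
      apply Finset.filter_true_of_mem
      intro c hc
      rw [hpart]
      exact hmax c hc
    have hl : plabel P x = k := by
      unfold plabel
      rw [this, hcard]
    exact hl ▸ Finset.le_sup (mem_univ x)

lemma plabel_mem_words (hcard : P.parts.card = k) (hk : 1 ≤ k) :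
    plabel P ∈ SetPartitionWords m k := by
  rw [words_iff]
  exact ⟨plabel_pos, fun i hi => plabel_zero hi, fun i hi => plabel_growth hi,
    plabel_sup hcard hk⟩

end SPW2

namespace SPW2
open Finset SPW

variable {m k : ℕ} {π : Fin m → ℕ}

lemma fiber_min_le_iff (hπ : π ∈ SetPartitionWords m k) (hk : 1 ≤ k) {u v : ℕ}
    (hu : u ∈ Finset.Icc 1 k) (hv : v ∈ Finset.Icc 1 k) :
    (fiber π u).min ≤ (fiber π v).min ↔ u ≤ v := by
  have hnu := fiber_nonempty hπ hk hu
  have hnv := fiber_nonempty hπ hk hv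
  rw [← Finset.coe_min' hnu, ← Finset.coe_min' hnv, WithTop.coe_le_coe]
  rw [Finset.mem_Icc] at hu hv
  constructor
  · intro h
    by_contra hlt
    push_neg at hlt
    exact absurd h (not_le_of_gt (fiber_min_lt hπ hk hv.1 hlt hu.2 hnv hnu)).elim
  · intro h
    rcases eq_or_lt_of_le h with rfl | hlt
    · exact le_refl _
    · exact le_of_lt (fiber_min_lt hπ hk hu.1 hlt hv.2 hnu hnv)

lemma plabel_toPart (hπ : π ∈ SetPartitionWords m k) (hk : 1 ≤ k) :
    plabel (toPart π hπ hk) = π := by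
  funext i
  unfold plabel
  rw [toPart_part_eq]
  have hparts : (toPart π hπ hk).parts = (Finset.Icc 1 k).image (fiber π) := rfl
  rw [hparts, Finset.filter_image]
  rw [Finset.card_image_of_injOn
    ((fiber_injOn hπ hk).mono (by exact_mod_cast Finset.filter_subset _ _))]
  have hπi : π i ∈ Finset.Icc 1 k := Finset.mem_Icc.2 ⟨val_pos hπ i, val_le hπ i⟩
  have : ((Finset.Icc 1 k).filter fun v => (fiber π v).min ≤ (fiber π (π i)).min)
      = Finset.Icc 1 (π i) := by
    ext v
    simp only [Finset.mem_filter, Finset.mem_Icc]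
    constructor
    · rintro ⟨⟨h1, h2⟩, hle⟩
      exact ⟨h1, (fiber_min_le_iff hπ hk (Finset.mem_Icc.2 ⟨h1, h2⟩) hπi).1 hle⟩
    · rintro ⟨h1, h2⟩
      have hv : v ∈ Finset.Icc 1 k := Finset.mem_Icc.2 ⟨h1, le_trans h2 (val_le hπ i)⟩
      exact ⟨Finset.mem_Icc.1 hv, (fiber_min_le_iff hπ hk hv hπi).2 h2⟩
  rw [this, Nat.card_Icc]
  omega

lemma toPart_plabel {P : Finpartition (Finset.univ : Finset (Fin m))}
    (hcard : P.parts.card = k) (hk : 1 ≤ k) :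
    toPart (plabel P) (plabel_mem_words hcard hk) hk = P := by
  set π := plabel P with hπdef
  have hπ : π ∈ SetPartitionWords m k := plabel_mem_words hcard hk
  have hfib : ∀ i : Fin m, fiber π (π i) = P.part i := by
    intro i
    ext j
    rw [mem_fiber]
    constructor
    · intro h
      exact part_eq_of_plabel_eq h ▸ mem_part' j
    · intro hj
      have : P.part j = P.part i := P.part_eq_of_mem (part_mem' i) hj
      exact plabel_congr this
  apply Finpartition.ext
  ext b
  have hparts : (toPart π hπ hk).parts = (Finset.Icc 1 k).image (fiber π) := rfl
  rw [hparts, Finset.mem_image]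
  constructor
  · rintro ⟨v, hv, rfl⟩
    rw [Finset.mem_Icc] at hv
    obtain ⟨i, hi⟩ := surj hπ hk v hv.1 hv.2
    rw [← hi, hfib]
    exact part_mem' i
  · intro hb
    obtain ⟨i, hib⟩ := P.nonempty_of_mem_parts hb
    have hbi : P.part i = b := P.part_eq_of_mem hb hib
    refine ⟨π i, Finset.mem_Icc.2 ⟨val_pos hπ i, val_le hπ i⟩, ?_⟩
    rw [hfib, hbi]

/-- The bijection between set-partition words and finpartitions. -/
noncomputable def wordEquiv (hk : 1 ≤ k) :
    (SetPartitionWords m k) ≃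
      {P : Finpartition (Finset.univ : Finset (Fin m)) // P.parts.card = k} where
  toFun := fun x => ⟨toPart x.1 x.2 hk, toPart_parts_card x.1 x.2 hk⟩
  invFun := fun y => ⟨plabel y.1, plabel_mem_words y.2 hk⟩
  left_inv := fun x => Subtype.ext (plabel_toPart x.2 hk)
  right_inv := fun y => Subtype.ext (toPart_plabel y.2 hk)

lemma ncard_words (hk : 1 ≤ k) :
    (SetPartitionWords m k).ncard = stirlingS2 m k := by
  rw [← Nat.card_coe_set_eq]
  exact Nat.card_congr (wordEquiv hk)

end SPW2

namespace SPW3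
open Finset SPW

def del {n : ℕ} (π : Fin n → ℕ) (t : ℕ) : Fin (n - 1) → ℕ :=
  fun j => if (j : ℕ) < t then π ⟨(j : ℕ), by have := j.isLt; omega⟩
           else π ⟨(j : ℕ) + 1, by have := j.isLt; omega⟩

lemma del_apply_lt {n : ℕ} (π : Fin n → ℕ) {t : ℕ} (j : Fin (n - 1)) (h : (j : ℕ) < t) :
    del π t j = π ⟨(j : ℕ), by have := j.isLt; omega⟩ := if_pos h

lemma del_apply_ge {n : ℕ} (π : Fin n → ℕ) {t : ℕ} (j : Fin (n - 1)) (h : ¬ (j : ℕ) < t) :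
    del π t j = π ⟨(j : ℕ) + 1, by have := j.isLt; omega⟩ := if_neg h

lemma app_eq {n : ℕ} (π : Fin n → ℕ) (j : Fin n) {a : ℕ} (h : a < n) (hv : (j : ℕ) = a) :
    π j = π ⟨a, h⟩ := by
  congr 1
  exact Fin.ext hv

section DelWords

variable {n k : ℕ} {π : Fin n → ℕ} {L : ℕ}

lemma del_cover (h2 : L + 2 < n) (heq : π ⟨L, by omega⟩ = π ⟨L + 2, h2⟩) (j'' : Fin n) :
    ∃ j' : Fin (n - 1), del π (L + 2) j' = π j'' ∧ (j' : ℕ) ≤ (j'' : ℕ) ∧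
      (L + 2 ≤ (j'' : ℕ) → (j' : ℕ) < (j'' : ℕ)) := by
  have hj2 := j''.isLt
  rcases lt_trichotomy ((j'' : ℕ)) (L + 2) with hlt | heq' | hgt
  · have hb : (j'' : ℕ) < n - 1 := by omega
    refine ⟨⟨(j'' : ℕ), hb⟩, ?_, le_refl _, by omega⟩
    exact (del_apply_lt π ⟨(j'' : ℕ), hb⟩ hlt).trans (app_eq π j'' (by omega) rfl).symm
  · have hb : L < n - 1 := by omega
    refine ⟨⟨L, hb⟩, ?_, show L ≤ (j'' : ℕ) by omega, fun _ => show L < (j'' : ℕ) by omega⟩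
    exact (del_apply_lt π ⟨L, hb⟩ (show L < L + 2 by omega)).trans
      (heq.trans (app_eq π j'' h2 heq').symm)
  · have hb : (j'' : ℕ) - 1 < n - 1 := by omega
    refine ⟨⟨(j'' : ℕ) - 1, hb⟩, ?_, show (j'' : ℕ) - 1 ≤ (j'' : ℕ) by omega, fun _ => show (j'' : ℕ) - 1 < (j'' : ℕ) by omega⟩
    exact (del_apply_ge π ⟨(j'' : ℕ) - 1, hb⟩ (show ¬((j'' : ℕ) - 1 < L + 2) by omega)).trans
      (app_eq π j'' (show (j'' : ℕ) - 1 + 1 < n by omega)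
        (show (j'' : ℕ) = (j'' : ℕ) - 1 + 1 by omega)).symm

lemma del_nsup_low (h2 : L + 2 < n) (t : ℕ) (ht : t ≤ L + 2) :
    nsup (del π (L + 2)) t = nsup π t := by
  apply le_antisymm
  · apply nsup_le
    intro j' hj'
    calc del π (L + 2) j' = π ⟨(j' : ℕ), by have := j'.isLt; omega⟩ :=
          del_apply_lt π j' (by omega)
      _ ≤ nsup π t := le_nsup (by simpa using hj')
  · apply nsup_le
    intro j'' hj''
    have hjn : (j'' : ℕ) < n - 1 := by omega
    calc π j'' = del π (L + 2) ⟨(j'' : ℕ), hjn⟩ :=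
          ((del_apply_lt π ⟨(j'' : ℕ), hjn⟩ (show (j'' : ℕ) < L + 2 by omega)).trans
            (app_eq π j'' j''.isLt rfl).symm).symm
      _ ≤ nsup (del π (L + 2)) t := le_nsup (by simpa using hj'')

lemma del_nsup_high (h2 : L + 2 < n) (heq : π ⟨L, by omega⟩ = π ⟨L + 2, h2⟩)
    (t : ℕ) (ht : L + 2 ≤ t) :
    nsup (del π (L + 2)) t = nsup π (t + 1) := by
  apply le_antisymm
  · apply nsup_le
    intro j' hj'
    by_cases hc : (j' : ℕ) < L + 2
    · calc del π (L + 2) j' = π ⟨(j' : ℕ), by have := j'.isLt; omega⟩ := del_apply_lt π j' hc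
        _ ≤ nsup π (t + 1) := le_nsup (by simp; omega)
    · calc del π (L + 2) j' = π ⟨(j' : ℕ) + 1, by have := j'.isLt; omega⟩ := del_apply_ge π j' hc
        _ ≤ nsup π (t + 1) := le_nsup (by simp; omega)
  · apply nsup_le
    intro j'' hj''
    obtain ⟨j', hval, hle, hlt⟩ := del_cover h2 heq j''
    rw [← hval]
    apply le_nsup
    rcases lt_or_ge ((j'' : ℕ)) (L + 2) with hc | hc
    · omega
    · have := hlt hc; omega

lemma del_sup (h2 : L + 2 < n) (heq : π ⟨L, by omega⟩ = π ⟨L + 2, h2⟩) :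
    Finset.univ.sup (del π (L + 2)) = Finset.univ.sup π := by
  apply le_antisymm
  · apply Finset.sup_le
    intro j' _
    by_cases hc : (j' : ℕ) < L + 2
    · calc del π (L + 2) j' = π ⟨(j' : ℕ), by have := j'.isLt; omega⟩ := del_apply_lt π j' hc
        _ ≤ Finset.univ.sup π := Finset.le_sup (mem_univ _)
    · calc del π (L + 2) j' = π ⟨(j' : ℕ) + 1, by have := j'.isLt; omega⟩ := del_apply_ge π j' hc
        _ ≤ Finset.univ.sup π := Finset.le_sup (mem_univ _)
  · apply Finset.sup_le
    intro j'' _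
    obtain ⟨j', hval, _, _⟩ := del_cover h2 heq j''
    exact hval ▸ Finset.le_sup (mem_univ j')

end DelWords

lemma del_mem_words {n k : ℕ} {π : Fin n → ℕ} {L : ℕ} (h2 : L + 2 < n)
    (hπ : π ∈ SetPartitionWords n k)
    (heq : π ⟨L, by omega⟩ = π ⟨L + 2, h2⟩) :
    del π (L + 2) ∈ SetPartitionWords (n - 1) k := by
  obtain ⟨ha, hb, hc, hd⟩ := words_iff.1 hπ
  rw [words_iff]
  refine ⟨?_, ?_, ?_, ?_⟩
  · intro j
    by_cases hcase : (j : ℕ) < L + 2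
    · rw [del_apply_lt π j hcase]; exact ha _
    · rw [del_apply_ge π j hcase]; exact ha _
  · intro j hj
    rw [del_apply_lt π j (by omega)]
    exact hb _ hj
  · intro j hj
    by_cases hcase : (j : ℕ) < L + 2
    · calc del π (L + 2) j = π ⟨(j : ℕ), by have := j.isLt; omega⟩ := del_apply_lt π j hcase
        _ ≤ 1 + nsup π (j : ℕ) := hc _ hj
        _ = 1 + nsup (del π (L + 2)) (j : ℕ) := by
            rw [del_nsup_low h2 (j : ℕ) (by omega)]
    · calc del π (L + 2) j = π ⟨(j : ℕ) + 1, by have := j.isLt; omega⟩ := del_apply_ge π j hcase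
        _ ≤ 1 + nsup π ((j : ℕ) + 1) := hc _ (show (j : ℕ) + 1 ≠ 0 by omega)
        _ = 1 + nsup (del π (L + 2)) (j : ℕ) := by
            rw [del_nsup_high h2 heq (j : ℕ) (by omega)]
  · rw [del_sup h2 heq]
    exact hd

end SPW3

namespace SPW3
open Finset SPW

variable {n k : ℕ}

/-- The set of pairs in the theorem. -/
def PairSet (n k : ℕ) : Set ((Fin n → ℕ) × Fin n) :=
  {p : (Fin n → ℕ) × Fin n |
        p.1 ∈ SetPartitionWords n k ∧
        ∃ h : (p.2 : ℕ) + 2 < n,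
          p.1 p.2 < p.1 ⟨(p.2 : ℕ) + 1, by omega⟩ ∧
          p.1 ⟨(p.2 : ℕ) + 2, h⟩ < p.1 ⟨(p.2 : ℕ) + 1, by omega⟩ ∧
          p.1 p.2 = p.1 ⟨(p.2 : ℕ) + 2, h⟩ ∧
          (∀ j : Fin n, (j : ℕ) < (p.2 : ℕ) + 1 →
            p.1 j < p.1 ⟨(p.2 : ℕ) + 1, by omega⟩)}

def Target (n k : ℕ) :=
  {q : (Fin (n - 1) → ℕ) × ℕ // q.1 ∈ SetPartitionWords (n - 1) k ∧ q.2 ∈ Finset.Icc 2 k}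

lemma pair_lt {p : (Fin n → ℕ) × Fin n} (hp : p ∈ PairSet n k) : (p.2 : ℕ) + 2 < n :=
  hp.2.choose

/-- uniqueness of strict left-to-right maxima positions carrying a given value -/
lemma first_pos_eq {m : ℕ} {σ : Fin m → ℕ} {v : ℕ} {a b : Fin m}
    (hav : σ a = v) (ha : ∀ j : Fin m, (j : ℕ) < (a : ℕ) → σ j < v)
    (hbv : σ b = v) (hb : ∀ j : Fin m, (j : ℕ) < (b : ℕ) → σ j < v) : a = b := by
  rcases lt_trichotomy ((a : ℕ)) ((b : ℕ)) with h | h | h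
  · have := hb a h; omega
  · exact Fin.ext h
  · have := ha b h; omega

/-- The forward map: delete position `ℓ+2` and record the peak value. -/
noncomputable def F (x : ↥(PairSet n k)) : Target n k :=
  ⟨(del x.1.1 ((x.1.2 : ℕ) + 2),
    x.1.1 ⟨(x.1.2 : ℕ) + 1, by have := pair_lt x.2; omega⟩), by
    obtain ⟨⟨π, ℓ⟩, hπ, hex⟩ := x
    dsimp only at hπ hex ⊢
    obtain ⟨h2, hpk1, hpk2, heq, hrec⟩ := hex
    have heq' : π ⟨(ℓ : ℕ), by omega⟩ = π ⟨(ℓ : ℕ) + 2, h2⟩ := heq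
    constructor
    · exact del_mem_words h2 hπ heq'
    · rw [Finset.mem_Icc]
      have h1 : 1 ≤ π ℓ := val_pos hπ ℓ
      have h2' : π ⟨(ℓ : ℕ) + 1, by omega⟩ ≤ k := val_le hπ _
      constructor
      · omega
      · exact h2'⟩

lemma F_injective : Function.Injective (F (n := n) (k := k)) := by
  rintro ⟨⟨π, ℓ⟩, hπ, hex⟩ ⟨⟨π', ℓ'⟩, hπ', hex'⟩ hFeq
  dsimp only at hπ hπ' hex hex'
  obtain ⟨h2, hpk1, hpk2, heq, hrec⟩ := hex
  obtain ⟨h2', hpk1', hpk2', heq', hrec'⟩ := hex'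
  have hσ : del π ((ℓ : ℕ) + 2) = del π' ((ℓ' : ℕ) + 2) := congrArg (·.1.1) hFeq
  have hv : π ⟨(ℓ : ℕ) + 1, by omega⟩ = π' ⟨(ℓ' : ℕ) + 1, by omega⟩ :=
    congrArg (·.1.2) hFeq
  -- key facts about first occurrence of the peak value in the deleted word
  have key : ∀ (τ : Fin n → ℕ) (t : Fin n) (h2t : (t : ℕ) + 2 < n),
      (∀ j : Fin n, (j : ℕ) < (t : ℕ) + 1 → τ j < τ ⟨(t : ℕ) + 1, by omega⟩) →
      (del τ ((t : ℕ) + 2) ⟨(t : ℕ) + 1, by omega⟩ = τ ⟨(t : ℕ) + 1, by omega⟩) ∧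
      (∀ j' : Fin (n - 1), (j' : ℕ) < (t : ℕ) + 1 →
        del τ ((t : ℕ) + 2) j' < τ ⟨(t : ℕ) + 1, by omega⟩) := by
    intro τ t h2t hrect
    constructor
    · exact (del_apply_lt τ ⟨(t : ℕ) + 1, by omega⟩ (show (t : ℕ) + 1 < (t : ℕ) + 2 by omega))
    · intro j' hj'
      have hjn : (j' : ℕ) < n := by have := j'.isLt; omega
      have e : del τ ((t : ℕ) + 2) j' = τ ⟨(j' : ℕ), hjn⟩ :=
        del_apply_lt τ j' (by omega)
      rw [e]
      exact hrect ⟨(j' : ℕ), hjn⟩ (by simpa using hj')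
  obtain ⟨ka1, ka2⟩ := key π ℓ h2 hrec
  obtain ⟨kb1, kb2⟩ := key π' ℓ' h2' hrec'
  have hLL : (⟨(ℓ : ℕ) + 1, by omega⟩ : Fin (n - 1)) = ⟨(ℓ' : ℕ) + 1, by omega⟩ := by
    apply first_pos_eq (σ := del π ((ℓ : ℕ) + 2)) (v := π ⟨(ℓ : ℕ) + 1, by omega⟩)
    · exact ka1
    · exact ka2
    · rw [hσ]
      exact kb1.trans hv.symm
    · intro j hj
      rw [hσ]
      exact lt_of_lt_of_le (kb2 j (by simpa using hj)) (le_of_eq hv.symm)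
  have hLval : (ℓ : ℕ) = (ℓ' : ℕ) := by
    have := congrArg Fin.val hLL
    simpa using this
  have hℓ : ℓ = ℓ' := Fin.ext hLval
  subst hℓ
  -- now show π = π'
  have hπeq : π = π' := by
    funext j
    have hj2 := j.isLt
    rcases lt_trichotomy ((j : ℕ)) ((ℓ : ℕ) + 2) with hc | hc | hc
    · have hb : (j : ℕ) < n - 1 := by omega
      have e1 : del π ((ℓ : ℕ) + 2) ⟨(j : ℕ), hb⟩ = π j :=
        (del_apply_lt π ⟨(j : ℕ), hb⟩ hc).trans (app_eq π j j.isLt rfl).symm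
      have e2 : del π' ((ℓ : ℕ) + 2) ⟨(j : ℕ), hb⟩ = π' j :=
        (del_apply_lt π' ⟨(j : ℕ), hb⟩ hc).trans (app_eq π' j j.isLt rfl).symm
      exact e1.symm.trans ((congrFun hσ _).trans e2)
    · have hbL : (ℓ : ℕ) < n - 1 := by omega
      have e1 : del π ((ℓ : ℕ) + 2) ⟨(ℓ : ℕ), hbL⟩ = π ℓ :=
        (del_apply_lt π ⟨(ℓ : ℕ), hbL⟩ (show (ℓ : ℕ) < (ℓ : ℕ) + 2 by omega)).trans
          (app_eq π ℓ ℓ.isLt rfl).symm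
      have e2 : del π' ((ℓ : ℕ) + 2) ⟨(ℓ : ℕ), hbL⟩ = π' ℓ :=
        (del_apply_lt π' ⟨(ℓ : ℕ), hbL⟩ (show (ℓ : ℕ) < (ℓ : ℕ) + 2 by omega)).trans
          (app_eq π' ℓ ℓ.isLt rfl).symm
      have e3 : π j = π ℓ := (app_eq π j h2 hc).trans heq.symm
      have e4 : π' j = π' ℓ := (app_eq π' j h2' hc).trans heq'.symm
      exact e3.trans ((e1.symm.trans ((congrFun hσ _).trans e2)).trans e4.symm)
    · have hb : (j : ℕ) - 1 < n - 1 := by omega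
      have e1 : del π ((ℓ : ℕ) + 2) ⟨(j : ℕ) - 1, hb⟩ = π j :=
        (del_apply_ge π ⟨(j : ℕ) - 1, hb⟩ (show ¬((j : ℕ) - 1 < (ℓ : ℕ) + 2) by omega)).trans
          (app_eq π j (show (j : ℕ) - 1 + 1 < n by omega)
            (show (j : ℕ) = (j : ℕ) - 1 + 1 by omega)).symm
      have e2 : del π' ((ℓ : ℕ) + 2) ⟨(j : ℕ) - 1, hb⟩ = π' j :=
        (del_apply_ge π' ⟨(j : ℕ) - 1, hb⟩ (show ¬((j : ℕ) - 1 < (ℓ : ℕ) + 2) by omega)).trans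
          (app_eq π' j (show (j : ℕ) - 1 + 1 < n by omega)
            (show (j : ℕ) = (j : ℕ) - 1 + 1 by omega)).symm
      exact e1.symm.trans ((congrFun hσ _).trans e2)
  apply Subtype.ext
  exact Prod.ext hπeq rfl

lemma F_surjective (hk : 1 ≤ k) : Function.Surjective (F (n := n) (k := k)) := by
  rintro ⟨⟨σ, v⟩, hσ, hvIcc⟩
  dsimp only at hσ hvIcc
  rw [Finset.mem_Icc] at hvIcc
  have hne : (fiber σ v).Nonempty :=
    fiber_nonempty hσ hk (Finset.mem_Icc.2 ⟨by omega, hvIcc.2⟩)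
  set p := (fiber σ v).min' hne with hpdef
  have hpv : σ p = v := mem_fiber.1 ((fiber σ v).min'_mem hne)
  have hfirst : ∀ j : Fin (n - 1), (j : ℕ) < (p : ℕ) → σ j ≠ v := by
    intro j hj hjv
    have hle := (fiber σ v).min'_le j (mem_fiber.2 hjv)
    rw [← hpdef] at hle
    have := Fin.le_def.1 hle
    omega
  have hless : ∀ j : Fin (n - 1), (j : ℕ) < (p : ℕ) → σ j < v :=
    lt_of_before_first hσ (by omega) hfirst
  have hp1 : 1 ≤ (p : ℕ) := by
    by_contra hcon
    have h0 : (p : ℕ) = 0 := by omega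
    have := (words_iff.1 hσ).2.1 p h0
    omega
  have hPn : (p : ℕ) < n - 1 := p.isLt
  set P := (p : ℕ) with hPdef
  have hn2 : 2 ≤ n := by omega
  -- the inserted word
  set π : Fin n → ℕ := fun j =>
    if h : (j : ℕ) ≤ P then σ ⟨(j : ℕ), by omega⟩
    else if h2 : (j : ℕ) = P + 1 then σ ⟨P - 1, by omega⟩
    else σ ⟨(j : ℕ) - 1, by have := j.isLt; omega⟩ with hπdef
  have e_le : ∀ (j : Fin n) (hj : (j : ℕ) ≤ P), π j = σ ⟨(j : ℕ), by omega⟩ := by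
    intro j hj
    rw [hπdef]
    exact dif_pos hj
  have e_mid : ∀ (j : Fin n) (hj : (j : ℕ) = P + 1), π j = σ ⟨P - 1, by omega⟩ := by
    intro j hj
    rw [hπdef]
    exact (dif_neg (by omega)).trans (dif_pos hj)
  have e_gt : ∀ (j : Fin n) (hj : P + 1 < (j : ℕ)),
      π j = σ ⟨(j : ℕ) - 1, by have := j.isLt; omega⟩ := by
    intro j hj
    rw [hπdef]
    exact (dif_neg (by omega)).trans (dif_neg (by omega))
  -- prefix sups
  have claimI : ∀ t, t ≤ P + 1 → nsup π t = nsup σ t := by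
    intro t ht
    apply le_antisymm
    · apply nsup_le
      intro j hj
      have hb : (j : ℕ) < n - 1 := by omega
      have e : π j = σ ⟨(j : ℕ), hb⟩ := e_le j (by omega)
      rw [e]
      exact le_nsup (show (j : ℕ) < t from hj)
    · apply nsup_le
      intro j' hj'
      have hb : (j' : ℕ) < n := by have := j'.isLt; omega
      have e : σ j' = π ⟨(j' : ℕ), hb⟩ :=
        (e_le ⟨(j' : ℕ), hb⟩ (show (j' : ℕ) ≤ P by omega)).symm
      rw [e]
      exact le_nsup (show (j' : ℕ) < t from hj')
  have claimII : ∀ t, P + 2 ≤ t → nsup π t = nsup σ (t - 1) := by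
    intro t ht
    apply le_antisymm
    · apply nsup_le
      intro j hj
      by_cases hc1 : (j : ℕ) ≤ P
      · rw [e_le j hc1]
        exact le_nsup (show (j : ℕ) < t - 1 by omega)
      · by_cases hc2 : (j : ℕ) = P + 1
        · rw [e_mid j hc2]
          exact le_nsup (show P - 1 < t - 1 by omega)
        · rw [e_gt j (by omega)]
          exact le_nsup (show (j : ℕ) - 1 < t - 1 by omega)
    · apply nsup_le
      intro j' hj'
      by_cases hc : (j' : ℕ) ≤ P
      · have hb : (j' : ℕ) < n := by have := j'.isLt; omega
        have e : σ j' = π ⟨(j' : ℕ), hb⟩ := (e_le ⟨(j' : ℕ), hb⟩ hc).symm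
        rw [e]
        exact le_nsup (show (j' : ℕ) < t by omega)
      · have hb : (j' : ℕ) + 1 < n := by have := j'.isLt; omega
        have e : σ j' = π ⟨(j' : ℕ) + 1, hb⟩ := by
          have h1 := e_gt ⟨(j' : ℕ) + 1, hb⟩ (show P + 1 < (j' : ℕ) + 1 by omega)
          exact ((app_eq σ j' (show (j' : ℕ) + 1 - 1 < n - 1 by have := j'.isLt; omega)
            (show (j' : ℕ) = (j' : ℕ) + 1 - 1 by omega)).trans h1.symm)
        rw [e]
        exact le_nsup (show (j' : ℕ) + 1 < t by omega)
  -- total sup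
  have hsup : Finset.univ.sup π = Finset.univ.sup σ := by
    apply le_antisymm
    · apply Finset.sup_le
      intro j _
      by_cases hc1 : (j : ℕ) ≤ P
      · rw [e_le j hc1]; exact Finset.le_sup (Finset.mem_univ _)
      · by_cases hc2 : (j : ℕ) = P + 1
        · rw [e_mid j hc2]; exact Finset.le_sup (Finset.mem_univ _)
        · rw [e_gt j (by omega)]; exact Finset.le_sup (Finset.mem_univ _)
    · apply Finset.sup_le
      intro j' _
      by_cases hc : (j' : ℕ) ≤ P
      · have hb : (j' : ℕ) < n := by have := j'.isLt; omega
        have e : σ j' = π ⟨(j' : ℕ), hb⟩ := (e_le ⟨(j' : ℕ), hb⟩ hc).symm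
        rw [e]; exact Finset.le_sup (Finset.mem_univ _)
      · have hb : (j' : ℕ) + 1 < n := by have := j'.isLt; omega
        have e : σ j' = π ⟨(j' : ℕ) + 1, hb⟩ := by
          have h1 := e_gt ⟨(j' : ℕ) + 1, hb⟩ (show P + 1 < (j' : ℕ) + 1 by omega)
          exact ((app_eq σ j' (show (j' : ℕ) + 1 - 1 < n - 1 by have := j'.isLt; omega)
            (show (j' : ℕ) = (j' : ℕ) + 1 - 1 by omega)).trans h1.symm)
        rw [e]; exact Finset.le_sup (Finset.mem_univ _)
  -- membership
  obtain ⟨sa, sb, sc, sd⟩ := words_iff.1 hσ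
  have hπmem : π ∈ SetPartitionWords n k := by
    rw [words_iff]
    refine ⟨?_, ?_, ?_, ?_⟩
    · intro j
      by_cases hc1 : (j : ℕ) ≤ P
      · rw [e_le j hc1]; exact sa _
      · by_cases hc2 : (j : ℕ) = P + 1
        · rw [e_mid j hc2]; exact sa _
        · rw [e_gt j (by omega)]; exact sa _
    · intro j hj
      rw [e_le j (by omega)]
      exact sb _ hj
    · intro j hj
      by_cases hc1 : (j : ℕ) ≤ P
      · calc π j = σ ⟨(j : ℕ), by omega⟩ := e_le j hc1
          _ ≤ 1 + nsup σ (j : ℕ) := sc _ hj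
          _ = 1 + nsup π (j : ℕ) := by rw [claimI (j : ℕ) (by omega)]
      · by_cases hc2 : (j : ℕ) = P + 1
        · calc π j = σ ⟨P - 1, by omega⟩ := e_mid j hc2
            _ ≤ nsup σ (P + 1) := le_nsup (show P - 1 < P + 1 by omega)
            _ = nsup π (P + 1) := (claimI (P + 1) (le_refl _)).symm
            _ ≤ 1 + nsup π (j : ℕ) := by rw [hc2]; omega
        · calc π j = σ ⟨(j : ℕ) - 1, by have := j.isLt; omega⟩ := e_gt j (by omega)
            _ ≤ 1 + nsup σ ((j : ℕ) - 1) := sc _ (show (j : ℕ) - 1 ≠ 0 by omega)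
            _ = 1 + nsup π (j : ℕ) := by rw [claimII (j : ℕ) (by omega)]
    · rw [hsup]; exact sd
  -- the peak position
  set ℓ : Fin n := ⟨P - 1, by omega⟩ with hℓdef
  have hℓval : (ℓ : ℕ) = P - 1 := by rw [hℓdef]
  have hL2 : (ℓ : ℕ) + 2 < n := by omega
  have hbP1 : P - 1 < n - 1 := by omega
  have hπℓ : π ℓ = σ ⟨P - 1, hbP1⟩ := by
    have e := e_le ℓ (show (ℓ : ℕ) ≤ P by omega)
    exact e.trans (app_eq σ ⟨(ℓ : ℕ), by omega⟩ hbP1 hℓval)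
  have hbP : (ℓ : ℕ) + 1 < n := by omega
  have hπl1 : π ⟨(ℓ : ℕ) + 1, hbP⟩ = v := by
    have e := e_le ⟨(ℓ : ℕ) + 1, hbP⟩ (show (ℓ : ℕ) + 1 ≤ P by omega)
    refine e.trans ?_
    have := (app_eq σ p (show (ℓ : ℕ) + 1 < n - 1 by omega)
      (show (p : ℕ) = (ℓ : ℕ) + 1 by omega)).symm
    exact this.trans hpv
  have hbP2 : (ℓ : ℕ) + 2 < n := hL2
  have hπl2 : π ⟨(ℓ : ℕ) + 2, hbP2⟩ = σ ⟨P - 1, hbP1⟩ := by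
    have e := e_mid ⟨(ℓ : ℕ) + 2, hbP2⟩ (show (ℓ : ℕ) + 2 = P + 1 by omega)
    exact e
  have hbot : σ ⟨P - 1, hbP1⟩ < v := hless ⟨P - 1, hbP1⟩ (show P - 1 < P by omega)
  -- assemble
  refine ⟨⟨(π, ℓ), ?_⟩, ?_⟩
  · refine ⟨hπmem, hL2, ?_, ?_, ?_, ?_⟩
    · show π ℓ < π ⟨(ℓ : ℕ) + 1, hbP⟩
      rw [hπℓ, hπl1]; exact hbot
    · show π ⟨(ℓ : ℕ) + 2, hbP2⟩ < π ⟨(ℓ : ℕ) + 1, hbP⟩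
      rw [hπl2, hπl1]; exact hbot
    · show π ℓ = π ⟨(ℓ : ℕ) + 2, hbP2⟩
      rw [hπℓ, hπl2]
    · intro j hj
      have hj' : (j : ℕ) < (ℓ : ℕ) + 1 := hj
      show π j < π ⟨(ℓ : ℕ) + 1, hbP⟩
      rw [hπl1]
      have e := e_le j (show (j : ℕ) ≤ P by omega)
      rw [e]
      exact hless ⟨(j : ℕ), by omega⟩ (show (j : ℕ) < P by omega)
  · apply Subtype.ext
    apply Prod.ext
    · show del π ((ℓ : ℕ) + 2) = σ
      funext j'
      have hj'n := j'.isLt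
      by_cases hc : (j' : ℕ) < (ℓ : ℕ) + 2
      · have e1 : del π ((ℓ : ℕ) + 2) j' = π ⟨(j' : ℕ), by omega⟩ := del_apply_lt π j' hc
        have e2 : π ⟨(j' : ℕ), by omega⟩ = σ ⟨(j' : ℕ), by omega⟩ :=
          e_le ⟨(j' : ℕ), by omega⟩ (show (j' : ℕ) ≤ P by omega)
        exact e1.trans (e2.trans (app_eq σ j' j'.isLt rfl).symm.symm.symm)
      · have e1 : del π ((ℓ : ℕ) + 2) j' = π ⟨(j' : ℕ) + 1, by omega⟩ := del_apply_ge π j' hc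
        have e2 : π ⟨(j' : ℕ) + 1, by omega⟩ = σ ⟨(j' : ℕ) + 1 - 1, by omega⟩ :=
          e_gt ⟨(j' : ℕ) + 1, by omega⟩ (show P + 1 < (j' : ℕ) + 1 by omega)
        have e3 : σ j' = σ ⟨(j' : ℕ) + 1 - 1, by omega⟩ :=
          app_eq σ j' (by omega) (by omega)
        exact e1.trans (e2.trans e3.symm)
    · show π ⟨(ℓ : ℕ) + 1, by omega⟩ = v
      exact hπl1

end SPW3

/-- The number of pairs `(π, ℓ)` with `π ∈ P_{n,k}` and `ℓ` a symmetric-peak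
position of `π` whose middle entry `π (ℓ+1)` is a record equals
`(k−1)·S(n−1,k)`. -/
theorem sympeak_record_count (n k : ℕ) (hk : 1 ≤ k) (hkn : k ≤ n) :
    Set.ncard {p : (Fin n → ℕ) × Fin n |
        p.1 ∈ SetPartitionWords n k ∧
        ∃ h : (p.2 : ℕ) + 2 < n,
          p.1 p.2 < p.1 ⟨(p.2 : ℕ) + 1, by omega⟩ ∧
          p.1 ⟨(p.2 : ℕ) + 2, h⟩ < p.1 ⟨(p.2 : ℕ) + 1, by omega⟩ ∧
          p.1 p.2 = p.1 ⟨(p.2 : ℕ) + 2, h⟩ ∧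
          (∀ j : Fin n, (j : ℕ) < (p.2 : ℕ) + 1 →
            p.1 j < p.1 ⟨(p.2 : ℕ) + 1, by omega⟩)} =
      (k - 1) * stirlingS2 (n - 1) k := by
  have hset : {p : (Fin n → ℕ) × Fin n |
        p.1 ∈ SetPartitionWords n k ∧
        ∃ h : (p.2 : ℕ) + 2 < n,
          p.1 p.2 < p.1 ⟨(p.2 : ℕ) + 1, by omega⟩ ∧
          p.1 ⟨(p.2 : ℕ) + 2, h⟩ < p.1 ⟨(p.2 : ℕ) + 1, by omega⟩ ∧
          p.1 p.2 = p.1 ⟨(p.2 : ℕ) + 2, h⟩ ∧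
          (∀ j : Fin n, (j : ℕ) < (p.2 : ℕ) + 1 →
            p.1 j < p.1 ⟨(p.2 : ℕ) + 1, by omega⟩)} = SPW3.PairSet n k := rfl
  rw [hset, ← Nat.card_coe_set_eq]
  have e1 : Nat.card (SPW3.PairSet n k) = Nat.card (SPW3.Target n k) :=
    Nat.card_congr (Equiv.ofBijective _ ⟨SPW3.F_injective, SPW3.F_surjective hk⟩)
  rw [e1]
  have e2 : Nat.card (SPW3.Target n k) =
      Nat.card (SetPartitionWords (n - 1) k) * Nat.card (Finset.Icc 2 k) := by
    exact (Nat.card_congr (Equiv.subtypeProdEquivProd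
      (p := fun w : Fin (n - 1) → ℕ => w ∈ SetPartitionWords (n - 1) k)
      (q := fun b : ℕ => b ∈ Finset.Icc 2 k))).trans (Nat.card_prod _ _)
  rw [e2, Nat.card_coe_set_eq, SPW2.ncard_words hk, Nat.card_eq_finsetCard,
    Nat.card_Icc]
  have : k + 1 - 2 = k - 1 := by omega
  rw [this, Nat.mul_comm]
end
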